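/- arXiv:2310.07353 — 3 statements merged into one kernel-verified Lean document; each statement's English description precedes it below -/
import Mathlib

section
/- Fix integers m, r ≥ 1, a point a ∈ ℝ, and continuous matrix-valued functions A₀, …, A_{r−1} : ℝ → ℂ^{m×m}. The set S of all r-times continuously differentiable functions y : ℝ → ℂ^m satisfying y^{(r)}(t) + Σ_{j=1}^{r} A_{r−j}(t) y^{(r−j)}(t) = 0 for all t ∈ ℝ is a ℂ-linear subspace of the space of functions ℝ → ℂ^m, and the linear map C : y ↦ (y(a), y'(a), …, y^{(r−1)}(a)) is a bijection from S onto ℂ^{rm}; in particular S has dimension rm. -/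
open Set Metric

section AbstractODE

variable {E : Type*} [NormedAddCommGroup E] [NormedSpace ℝ E] [CompleteSpace E]

/-- Local existence for a linear ODE on a short interval, from Picard–Lindelöf. -/
theorem linearODE_step (B : ℝ → E →L[ℝ] E) {p q : ℝ} (hpq : p ≤ q) (K : NNReal)
    (hK : ∀ t ∈ Icc p q, ‖B t‖ ≤ K) (hBx : ∀ x, Continuous fun t => B t x)
    (hsmall : (K : ℝ) * (q - p) ≤ 1 / 2) (x₀ : E) :
    ∃ f : ℝ → E, f p = x₀ ∧
      ∀ t ∈ Icc p q, HasDerivWithinAt f (B t (f t)) (Icc p q) t := by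
  have hpl : IsPicardLindelof (fun t x => B t x) (⟨p, le_rfl, hpq⟩ : Icc p q) x₀ (‖x₀‖₊ + 1) 0
      (K * (2 * ‖x₀‖₊ + 1)) K :=
    { lipschitzOnWith := fun t ht => by
        refine LipschitzOnWith.mono (LipschitzWith.lipschitzOnWith ?_) (subset_univ _)
        refine LipschitzWith.weaken (B t).lipschitz ?_
        have := hK t ht
        rwa [← NNReal.coe_le_coe, coe_nnnorm]
      continuousOn := fun x _ => (hBx x).continuousOn
      norm_le := fun t ht x hx => by
        have h1 : ‖B t x‖ ≤ ‖B t‖ * ‖x‖ := (B t).le_opNorm x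
        have h2 : ‖x‖ ≤ 2 * ‖x₀‖ + 1 := by
          have := mem_closedBall_iff_norm.mp hx
          simp only [NNReal.coe_add, coe_nnnorm, NNReal.coe_one] at this
          have := norm_le_insert' x x₀
          nlinarith [norm_nonneg (x - x₀), norm_nonneg x₀]
        have h3 := hK t ht
        have h4 : (0:ℝ) ≤ ‖x‖ := norm_nonneg x
        simp only [NNReal.coe_mul, NNReal.coe_add, coe_nnnorm, NNReal.coe_one, NNReal.coe_ofNat]
        nlinarith [norm_nonneg (B t), NNReal.coe_nonneg K]
      mul_max_le := by
        simp only [sub_self, NNReal.coe_mul, NNReal.coe_add, coe_nnnorm, NNReal.coe_one,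
          NNReal.coe_ofNat, NNReal.coe_zero, sub_zero]
        rw [max_eq_left (sub_nonneg.mpr hpq)]
        nlinarith [norm_nonneg x₀, NNReal.coe_nonneg K, sub_nonneg.mpr hpq] }
  obtain ⟨f, hf0, hf⟩ := hpl.exists_eq_forall_mem_Icc_hasDerivWithinAt₀
  exact ⟨f, hf0, hf⟩

/-- Gluing two solutions matched at a common endpoint. -/
theorem linearODE_glue (B : ℝ → E →L[ℝ] E) {p q s : ℝ} (hpq : p ≤ q) (hqs : q ≤ s)
    {f g : ℝ → E}
    (hf : ∀ t ∈ Icc p q, HasDerivWithinAt f (B t (f t)) (Icc p q) t)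
    (hg : ∀ t ∈ Icc q s, HasDerivWithinAt g (B t (g t)) (Icc q s) t)
    (hmatch : f q = g q) :
    ∃ h : ℝ → E, EqOn h f (Icc p q) ∧ EqOn h g (Icc q s) ∧
      ∀ t ∈ Icc p s, HasDerivWithinAt h (B t (h t)) (Icc p s) t := by
  classical
  set h : ℝ → E := fun t => if t ≤ q then f t else g t with hh
  have hEf : EqOn h f (Icc p q) := fun t ht => if_pos ht.2
  have hEg : EqOn h g (Icc q s) := by
    intro t ht
    by_cases htq : t ≤ q
    · have : t = q := le_antisymm htq ht.1
      simp [h, htq, this, hmatch]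
    · simp [h, htq]
  have hunion : Icc p q ∪ Icc q s = Icc p s := Icc_union_Icc_eq_Icc hpq hqs
  refine ⟨h, hEf, hEg, fun t ht => ?_⟩
  rcases lt_trichotomy t q with hlt | heq | hgt
  · have htq : t ∈ Icc p q := ⟨ht.1, hlt.le⟩
    have h1 : HasDerivWithinAt h (B t (f t)) (Icc p q) t :=
      (hf t htq).congr hEf (hEf htq)
    have h2 : B t (f t) = B t (h t) := by rw [hEf htq]
    rw [h2] at h1
    refine h1.mono_of_mem_nhdsWithin ?_
    have : Iic q ∈ nhdsWithin t (Icc p s) :=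
      mem_nhdsWithin_of_mem_nhds (Iic_mem_nhds hlt)
    refine Filter.mem_of_superset (Filter.inter_mem this self_mem_nhdsWithin) ?_
    rintro x ⟨hx1, hx2⟩
    exact ⟨hx2.1, hx1⟩
  · subst heq
    have htq : t ∈ Icc p t := ⟨ht.1, le_rfl⟩
    have h1 : HasDerivWithinAt h (B t (f t)) (Icc p t) t :=
      (hf t htq).congr hEf (hEf htq)
    have h2 : HasDerivWithinAt h (B t (f t)) (Icc t s) t := by
      have := (hg t ⟨le_rfl, hqs⟩).congr hEg (hEg ⟨le_rfl, hqs⟩)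
      rwa [← hmatch] at this
    have h3 := h1.union h2
    rw [hunion] at h3
    have : B t (f t) = B t (h t) := by rw [hEf htq]
    rwa [this] at h3
  · have htq : t ∈ Icc q s := ⟨hgt.le, ht.2⟩
    have h1 : HasDerivWithinAt h (B t (g t)) (Icc q s) t :=
      (hg t htq).congr hEg (hEg htq)
    have h2 : B t (g t) = B t (h t) := by rw [hEg htq]
    rw [h2] at h1
    refine h1.mono_of_mem_nhdsWithin ?_
    have : Ici q ∈ nhdsWithin t (Icc p s) :=
      mem_nhdsWithin_of_mem_nhds (Ici_mem_nhds hgt)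
    refine Filter.mem_of_superset (Filter.inter_mem this self_mem_nhdsWithin) ?_
    rintro x ⟨hx1, hx2⟩
    exact ⟨hx1, hx2.2⟩

end AbstractODE

set_option linter.unusedSectionVars false

section AbstractODE2

variable {E : Type*} [NormedAddCommGroup E] [NormedSpace ℝ E] [CompleteSpace E]

theorem linearODE_forward (B : ℝ → E →L[ℝ] E) (hB : Continuous B)
    (a b : ℝ) (hab : a ≤ b) (v : E) :
    ∃ f : ℝ → E, f a = v ∧
      ∀ t ∈ Icc a b, HasDerivWithinAt f (B t (f t)) (Icc a b) t := by
  have hBx : ∀ x, Continuous fun t => B t x := fun x =>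
    hB.clm_apply continuous_const
  -- bound for ‖B‖ on Icc a b
  obtain ⟨K₀, hK₀⟩ : ∃ K₀ : ℝ, ∀ t ∈ Icc a b, ‖B t‖ ≤ K₀ := by
    rcases (isCompact_Icc (a := a) (b := b)).exists_bound_of_continuousOn
      (hB.norm.continuousOn) with ⟨C, hC⟩
    exact ⟨C, fun t ht => by simpa using hC t ht⟩
  set K : NNReal := ⟨max K₀ 1, le_trans zero_le_one (le_max_right _ _)⟩ with hKdef
  have hK : ∀ t ∈ Icc a b, ‖B t‖ ≤ K := fun t ht =>
    (hK₀ t ht).trans (le_max_left _ _)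
  have hKpos : (0 : ℝ) < K := lt_of_lt_of_le zero_lt_one (le_max_right _ _)
  set δ : ℝ := 1 / (2 * K) with hδdef
  have hδpos : 0 < δ := by positivity
  -- inductive chain
  have main : ∀ k : ℕ, ∃ f : ℝ → E, f a = v ∧
      ∀ t ∈ Icc a (min (a + k * δ) b),
        HasDerivWithinAt f (B t (f t)) (Icc a (min (a + k * δ) b)) t := by
    intro k
    induction k with
    | zero =>
      refine ⟨fun _ => v, rfl, ?_⟩
      simp only [Nat.cast_zero, zero_mul, add_zero, min_eq_left hab]
      intro t ht
      have : t = a := le_antisymm ht.2 ht.1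
      subst this
      rw [Icc_self]
      have hbot : nhdsWithin t ({t} \ {t} : Set ℝ) = ⊥ := by
        rw [Set.diff_self, nhdsWithin_empty]
      rw [hasDerivWithinAt_iff_hasFDerivWithinAt]
      exact HasFDerivWithinAt.of_subsingleton subsingleton_singleton
    | succ k ih =>
      obtain ⟨f, hfa, hf⟩ := ih
      set c := min (a + k * δ) b with hc
      by_cases hcb : b ≤ c
      · have hcb' : c = b := le_antisymm (min_le_right _ _) hcb
        have hb1 : b ≤ a + k * δ := hcb.trans (min_le_left _ _)
        have h2 : min (a + (k+1 : ℕ) * δ) b = c := by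
          rw [hcb', min_eq_right]
          push_cast; nlinarith [hδpos.le]
        rw [h2]
        exact ⟨f, hfa, hf⟩
      · push_neg at hcb
        set q := min (c + δ) b with hq
        have hcq : c ≤ q := le_min (le_add_of_nonneg_right hδpos.le) hcb.le
        have hac : a ≤ c := le_min (le_add_of_nonneg_right (by positivity)) hab
        have hqb : q ≤ b := min_le_right _ _
        have hKq : ∀ t ∈ Icc c q, ‖B t‖ ≤ K := fun t ht =>
          hK t ⟨hac.trans ht.1, ht.2.trans hqb⟩
        have hsmall : (K : ℝ) * (q - c) ≤ 1 / 2 := by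
          have : q - c ≤ δ := by
            have : q ≤ c + δ := min_le_left _ _
            linarith
          calc (K : ℝ) * (q - c) ≤ (K : ℝ) * δ := by
                exact mul_le_mul_of_nonneg_left this hKpos.le
          _ = 1 / 2 := by rw [hδdef]; field_simp
        obtain ⟨g, hgc, hg⟩ := linearODE_step B hcq K hKq hBx hsmall (f c)
        obtain ⟨h, hEf, _hEg, hsol⟩ := linearODE_glue B hac hcq
          (hf) hg hgc.symm
        have hmin : min (a + (k+1 : ℕ) * δ) b = q := by
          rcases le_or_gt (a + k * δ) b with h1 | h1
          · have hc1 : c = a + k * δ := min_eq_left h1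
            rw [hq, hc1]
            push_cast
            have : a + ((k:ℝ)+1) * δ = a + (k:ℝ) * δ + δ := by ring
            rw [this]
          · exact absurd (min_eq_right h1.le ▸ hcb) (lt_irrefl b)
        rw [hmin]
        exact ⟨h, by rw [hEf ⟨le_rfl, hac⟩, hfa], hsol⟩
  obtain ⟨k, hk⟩ := exists_nat_ge ((b - a) / δ)
  obtain ⟨f, hfa, hf⟩ := main k
  have : min (a + k * δ) b = b := by
    rw [min_eq_right]
    rw [div_le_iff₀ hδpos] at hk
    linarith
  rw [this] at hf
  exact ⟨f, hfa, hf⟩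

end AbstractODE2

section AbstractODE3

variable {E : Type*} [NormedAddCommGroup E] [NormedSpace ℝ E] [CompleteSpace E]

theorem linearODE_backward (B : ℝ → E →L[ℝ] E) (hB : Continuous B)
    (a b : ℝ) (hba : b ≤ a) (v : E) :
    ∃ f : ℝ → E, f a = v ∧
      ∀ t ∈ Icc b a, HasDerivWithinAt f (B t (f t)) (Icc b a) t := by
  set B' : ℝ → E →L[ℝ] E := fun t => -(B (2 * a - t)) with hB'
  have hB'c : Continuous B' := by
    exact (hB.comp (by continuity)).neg
  obtain ⟨g, hga, hg⟩ := linearODE_forward B' hB'c a (2 * a - b) (by linarith) v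
  refine ⟨fun t => g (2 * a - t), by dsimp only; rw [show 2*a - a = a from by ring]; exact hga, fun t ht => ?_⟩
  have hmem : 2 * a - t ∈ Icc a (2 * a - b) := ⟨by linarith [ht.2], by linarith [ht.1]⟩
  have hinner : HasDerivWithinAt (fun u : ℝ => 2 * a - u) (-1) (Icc b a) t :=
    ((hasDerivAt_id t).const_sub (2 * a)).hasDerivWithinAt
  have hmaps : Set.MapsTo (fun u : ℝ => 2 * a - u) (Icc b a) (Icc a (2 * a - b)) :=
    fun u hu => ⟨by dsimp only; linarith [hu.2], by dsimp only; linarith [hu.1]⟩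
  have := (hg _ hmem).scomp t hinner hmaps
  simpa [hB', Function.comp_def] using this

theorem linearODE_Icc (B : ℝ → E →L[ℝ] E) (hB : Continuous B)
    (a p q : ℝ) (hpa : p ≤ a) (haq : a ≤ q) (v : E) :
    ∃ f : ℝ → E, f a = v ∧
      ∀ t ∈ Icc p q, HasDerivWithinAt f (B t (f t)) (Icc p q) t := by
  obtain ⟨f, hfa, hf⟩ := linearODE_backward B hB a p hpa v
  obtain ⟨g, hga, hg⟩ := linearODE_forward B hB a q haq v
  obtain ⟨h, hEf, _, hsol⟩ := linearODE_glue B hpa haq hf hg (by rw [hfa, hga])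
  exact ⟨h, by rw [hEf ⟨hpa, le_rfl⟩, hfa], hsol⟩

/-- Uniqueness of solutions on a closed interval whose interior contains the initial time. -/
theorem linearODE_unique_Icc (B : ℝ → E →L[ℝ] E) (hB : Continuous B)
    {p q t₀ : ℝ} (ht₀ : t₀ ∈ Ioo p q) {f g : ℝ → E}
    (hf : ∀ t ∈ Icc p q, HasDerivWithinAt f (B t (f t)) (Icc p q) t)
    (hg : ∀ t ∈ Icc p q, HasDerivWithinAt g (B t (g t)) (Icc p q) t)
    (h0 : f t₀ = g t₀) : EqOn f g (Icc p q) := by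
  have hpq : p ≤ q := (ht₀.1.trans ht₀.2).le
  obtain ⟨K₀, hK₀⟩ := (isCompact_Icc (a := p) (b := q)).exists_bound_of_continuousOn
      (hB.norm.continuousOn)
  set K : NNReal := ⟨max K₀ 0, le_max_right _ _⟩ with hKdef
  set v : ℝ → E → E := fun t x => B (Set.projIcc p q hpq t) x with hv
  have hlip : ∀ t : ℝ, LipschitzOnWith K (v t) univ := by
    intro t
    refine LipschitzOnWith.mono (LipschitzWith.lipschitzOnWith ?_) (subset_univ _)
    refine LipschitzWith.weaken (B (Set.projIcc p q hpq t)).lipschitz ?_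
    rw [← NNReal.coe_le_coe, coe_nnnorm]
    exact le_trans (by simpa using hK₀ _ (Set.projIcc p q hpq t).2) (le_max_left _ _)
  have hIcc : ∀ {F : ℝ → E}, (∀ t ∈ Icc p q, HasDerivWithinAt F (B t (F t)) (Icc p q) t) →
      ContinuousOn F (Icc p q) := fun hF =>
    fun t ht => (hF t ht).continuousWithinAt
  have key : ∀ t ∈ Ioo p q, ∀ {F : ℝ → E},
      (∀ s ∈ Icc p q, HasDerivWithinAt F (B s (F s)) (Icc p q) s) →
      HasDerivAt F (v t (F t)) t := by
    intro t ht F hF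
    have h1 : HasDerivAt F (B t (F t)) t :=
      (hF t (Ioo_subset_Icc_self ht)).hasDerivAt (Icc_mem_nhds ht.1 ht.2)
    have h2 : v t (F t) = B t (F t) := by
      rw [hv]; simp [Set.projIcc_of_mem hpq (Ioo_subset_Icc_self ht)]
    rwa [h2]
  exact ODE_solution_unique_of_mem_Icc (s := fun _ => univ) (fun t _ => hlip t) ht₀
    (hIcc hf) (fun t ht => key t ht hf) (fun _ _ => trivial)
    (hIcc hg) (fun t ht => key t ht hg) (fun _ _ => trivial) h0

/-- Global existence and uniqueness for a linear ODE with continuous coefficients. -/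
theorem linearODE_global (B : ℝ → E →L[ℝ] E) (hB : Continuous B) (a : ℝ) (v : E) :
    ∃ F : ℝ → E, F a = v ∧ ∀ t, HasDerivAt F (B t (F t)) t := by
  have hsol : ∀ n : ℕ, ∃ f : ℝ → E, f a = v ∧
      ∀ t ∈ Icc (a - (n+1)) (a + (n+1)), HasDerivWithinAt f (B t (f t))
        (Icc (a - (n+1)) (a + (n+1))) t :=
    fun n => linearODE_Icc B hB a _ _ (by linarith [Nat.cast_nonneg (α := ℝ) n])
      (by linarith [Nat.cast_nonneg (α := ℝ) n]) v
  choose y hya hy using hsol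
  have hmemself : ∀ t : ℝ, t ∈ Icc (a - ((⌈|t - a|⌉₊ : ℝ)+1)) (a + ((⌈|t - a|⌉₊ : ℝ)+1)) := by
    intro t
    have h1 : |t - a| ≤ (⌈|t - a|⌉₊ : ℝ) := Nat.le_ceil _
    have h2 := abs_le.mp h1
    exact ⟨by linarith [h2.1], by linarith [h2.2]⟩
  have hmemint : ∀ t : ℝ, t ∈ Ioo (a - ((⌈|t - a|⌉₊ : ℝ)+1)) (a + ((⌈|t - a|⌉₊ : ℝ)+1)) := by
    intro t
    have h1 : |t - a| ≤ (⌈|t - a|⌉₊ : ℝ) := Nat.le_ceil _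
    have h2 := abs_le.mp h1
    exact ⟨by linarith [h2.1], by linarith [h2.2]⟩
  have hagree : ∀ (k l : ℕ) (s : ℝ), s ∈ Icc (a - (k+1)) (a + (k+1)) →
      s ∈ Icc (a - (l+1)) (a + (l+1)) → y k s = y l s := by
    have main : ∀ (k l : ℕ), k ≤ l → ∀ s ∈ Icc (a - ((k:ℝ)+1)) (a + ((k:ℝ)+1)),
        y k s = y l s := by
      intro k l hkl s hs
      have hsub : Icc (a - ((k:ℝ)+1)) (a + ((k:ℝ)+1)) ⊆
          Icc (a - ((l:ℝ)+1)) (a + ((l:ℝ)+1)) := by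
        apply Icc_subset_Icc <;>
          · have : (k : ℝ) ≤ l := Nat.cast_le.mpr hkl
            linarith
      refine linearODE_unique_Icc B hB
        (t₀ := a) ⟨by linarith [Nat.cast_nonneg (α := ℝ) k], by linarith [Nat.cast_nonneg (α := ℝ) k]⟩
        (hy k) (fun t ht => ((hy l t (hsub ht)).mono hsub)) (by rw [hya k, hya l]) hs
    intro k l s hsk hsl
    rcases le_total k l with h | h
    · exact main k l h s hsk
    · exact (main l k h s hsl).symm
  refine ⟨fun t => y ⌈|t - a|⌉₊ t, by simpa using hya ⌈|a - a|⌉₊, fun t => ?_⟩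
  set n := ⌈|t - a|⌉₊ with hn
  have hDeriv : HasDerivAt (y n) (B t (y n t)) t :=
    (hy n t (hmemself t)).hasDerivAt (Icc_mem_nhds (hmemint t).1 (hmemint t).2)
  have hEq : (fun s => y ⌈|s - a|⌉₊ s) =ᶠ[nhds t] y n := by
    refine Filter.eventually_of_mem
      (Ioo_mem_nhds (hmemint t).1 (hmemint t).2) fun s hs => ?_
    exact hagree ⌈|s - a|⌉₊ n s (hmemself s) (Ioo_subset_Icc_self hs)
  exact hDeriv.congr_of_eventuallyEq hEq

theorem linearODE_unique_global (B : ℝ → E →L[ℝ] E) (hB : Continuous B) (a : ℝ)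
    {F G : ℝ → E} (hF : ∀ t, HasDerivAt F (B t (F t)) t)
    (hG : ∀ t, HasDerivAt G (B t (G t)) t) (h0 : F a = G a) : F = G := by
  funext t
  have hmem : t ∈ Icc (a - (|t - a| + 1)) (a + (|t - a| + 1)) := by
    have := abs_le.mp (le_refl |t - a|)
    exact ⟨by linarith [this.1], by linarith [this.2]⟩
  have ha : a ∈ Ioo (a - (|t - a| + 1)) (a + (|t - a| + 1)) := by
    constructor <;> · have := abs_nonneg (t - a); linarith
  exact linearODE_unique_Icc B hB ha
    (fun s _ => (hF s).hasDerivWithinAt) (fun s _ => (hG s).hasDerivWithinAt) h0 hmem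

end AbstractODE3

section Concrete

variable {m r : ℕ}

/-- The companion linear map of the order-`r` system, as a function of time. -/
noncomputable def sysB (A : Fin r → ℝ → Matrix (Fin m) (Fin m) ℂ) (t : ℝ) :
    (Fin r → Fin m → ℂ) →L[ℝ] (Fin r → Fin m → ℂ) :=
  LinearMap.toContinuousLinearMap
  { toFun := fun Y j => if h : (j : ℕ) + 1 < r then Y ⟨(j : ℕ) + 1, h⟩
      else -∑ i, (A i t).mulVec (Y i)
    map_add' := by
      intro Y Z
      funext j
      by_cases h : (j : ℕ) + 1 < r
      · simp [h]
      · simp only [h, dif_neg, not_false_iff, Pi.add_apply]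
        simp [Matrix.mulVec_add, Finset.sum_add_distrib]
        abel
    map_smul' := by
      intro c Y
      funext j
      by_cases h : (j : ℕ) + 1 < r
      · simp [h]
      · simp only [h, dif_neg, not_false_iff, Pi.smul_apply, RingHom.id_apply]
        simp [Matrix.mulVec_smul, Finset.smul_sum, smul_neg] }

theorem sysB_apply (A : Fin r → ℝ → Matrix (Fin m) (Fin m) ℂ) (t : ℝ)
    (Y : Fin r → Fin m → ℂ) (j : Fin r) :
    sysB A t Y j = if h : (j : ℕ) + 1 < r then Y ⟨(j : ℕ) + 1, h⟩
      else -∑ i, (A i t).mulVec (Y i) := rfl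

theorem sysB_continuous (A : Fin r → ℝ → Matrix (Fin m) (Fin m) ℂ)
    (hA : ∀ j, Continuous (A j)) : Continuous (sysB A) := by
  rw [continuous_clm_apply]
  intro Y
  refine continuous_pi fun j => ?_
  rw [show (fun t => sysB A t Y j) = fun t =>
      if h : (j : ℕ) + 1 < r then Y ⟨(j : ℕ) + 1, h⟩
      else -∑ i, (A i t).mulVec (Y i) from rfl]
  by_cases h : (j : ℕ) + 1 < r
  · simp only [h, dif_pos]; exact continuous_const
  · simp only [h, dif_neg, not_false_iff]
    refine Continuous.neg ?_
    refine continuous_pi fun k => ?_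
    rw [show (fun t => (∑ i, (A i t).mulVec (Y i)) k)
        = fun t => ∑ i, ∑ l, A i t k l * Y i l from by
      funext t; simp [Matrix.mulVec, dotProduct]]
    refine continuous_finset_sum _ fun i _ => continuous_finset_sum _ fun l _ => ?_
    exact (((continuous_apply l).comp ((continuous_apply k).comp (hA i))).mul continuous_const)

end Concrete

section Correspond

variable {m p : ℕ}

theorem cont_rhs (A : Fin (p+1) → ℝ → Matrix (Fin m) (Fin m) ℂ)
    (hA : ∀ j, Continuous (A j)) {F : ℝ → Fin (p+1) → Fin m → ℂ}
    (hF : Continuous F) :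
    Continuous fun t => -∑ i, (A i t).mulVec (F t i) := by
  refine Continuous.neg ?_
  refine continuous_pi fun k => ?_
  rw [show (fun t => (∑ i, (A i t).mulVec (F t i)) k)
      = fun t => ∑ i, ∑ l, A i t k l * F t i l from by
    funext t; simp [Matrix.mulVec, dotProduct]]
  refine continuous_finset_sum _ fun i _ => continuous_finset_sum _ fun l _ => ?_
  exact ((continuous_apply l).comp ((continuous_apply k).comp (hA i))).mul
    ((continuous_apply l).comp ((continuous_apply i).comp hF))

/-- From a solution of the first-order system to a solution of the order-`r` equation. -/
theorem system_to_highOrder (A : Fin (p+1) → ℝ → Matrix (Fin m) (Fin m) ℂ)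
    (hA : ∀ j, Continuous (A j)) {F : ℝ → Fin (p+1) → Fin m → ℂ}
    (hF : ∀ t, HasDerivAt F (sysB A t (F t)) t) :
    (∀ (j : ℕ) (h : j < p+1), iteratedDeriv j (fun t => F t ⟨0, Nat.succ_pos p⟩)
        = fun t => F t ⟨j, h⟩) ∧
    ContDiff ℝ (p+1) (fun t => F t ⟨0, Nat.succ_pos p⟩) ∧
    (∀ t, iteratedDeriv (p+1) (fun t => F t ⟨0, Nat.succ_pos p⟩) t +
      ∑ j : Fin (p+1), (A j t).mulVec
        (iteratedDeriv (j : ℕ) (fun t => F t ⟨0, Nat.succ_pos p⟩) t) = 0) := by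
  set y : ℝ → Fin m → ℂ := fun t => F t ⟨0, Nat.succ_pos p⟩ with hy
  have L1 : ∀ (j : Fin (p+1)) (t : ℝ),
      HasDerivAt (fun s => F s j) (sysB A t (F t) j) t :=
    fun j t => (hasDerivAt_pi.mp (hF t)) j
  have hFd : Differentiable ℝ F := fun t => (hF t).differentiableAt
  have hFc : Continuous F := hFd.continuous
  have L2 : ∀ (j : ℕ) (h : j < p+1), iteratedDeriv j y = fun t => F t ⟨j, h⟩ := by
    intro j
    induction j with
    | zero => intro h; rw [iteratedDeriv_zero]
    | succ j ih =>
      intro h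
      have hj : j < p + 1 := Nat.lt_of_succ_lt h
      rw [iteratedDeriv_succ, ih hj]
      funext t
      have := (L1 ⟨j, hj⟩ t).deriv
      rw [this, sysB_apply]
      simp only [dif_pos h]
  have L3 : iteratedDeriv (p+1) y = fun t => -∑ i, (A i t).mulVec (F t i) := by
    rw [iteratedDeriv_succ, L2 p (Nat.lt_succ_self p)]
    funext t
    have := (L1 ⟨p, Nat.lt_succ_self p⟩ t).deriv
    rw [this, sysB_apply]
    simp only [dif_neg (lt_irrefl (p+1))]
  have L4 : ∀ (k j : ℕ), j + k ≤ p + 1 → ContDiff ℝ k (iteratedDeriv j y) := by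
    intro k
    induction k with
    | zero =>
      intro j hj
      rw [show ((0:ℕ) : WithTop ℕ∞) = 0 from by norm_cast, contDiff_zero]
      rcases Nat.lt_or_ge j (p+1) with h | h
      · rw [L2 j h]
        exact (continuous_apply _).comp hFc
      · have : j = p + 1 := le_antisymm (by simpa using hj) h
        subst this
        rw [L3]
        exact cont_rhs A hA hFc
    | succ k ih =>
      intro j hj
      have hjp : j < p + 1 := by omega
      have hcast : ((k+1 : ℕ) : WithTop ℕ∞) = (k : WithTop ℕ∞) + 1 := by push_cast; rfl
      rw [hcast, contDiff_succ_iff_deriv]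
      refine ⟨?_, ?_, ?_⟩
      · rw [L2 j hjp]
        exact fun t => ((L1 ⟨j, hjp⟩ t).differentiableAt)
      · intro hω
        exact absurd hω (by simp)
      · rw [← iteratedDeriv_succ]
        exact ih (j+1) (by omega)
  have hyCD : ContDiff ℝ (p+1) y := by
    have := L4 (p+1) 0 (by omega)
    rwa [iteratedDeriv_zero] at this
  refine ⟨L2, hyCD, fun t => ?_⟩
  rw [L3]
  have : ∀ j : Fin (p+1), iteratedDeriv (j : ℕ) y t = F t j := by
    intro j
    rw [L2 (j : ℕ) j.isLt]
  simp only [this]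
  simp

/-- From a solution of the order-`r` equation to a solution of the first-order system. -/
theorem highOrder_to_system (A : Fin (p+1) → ℝ → Matrix (Fin m) (Fin m) ℂ)
    {y : ℝ → Fin m → ℂ} (hy : ContDiff ℝ (p+1) y)
    (heq : ∀ t, iteratedDeriv (p+1) y t +
      ∑ j : Fin (p+1), (A j t).mulVec (iteratedDeriv (j : ℕ) y t) = 0) :
    ∀ t, HasDerivAt (fun s (j : Fin (p+1)) => iteratedDeriv (j : ℕ) y s)
      (sysB A t (fun j : Fin (p+1) => iteratedDeriv (j : ℕ) y t)) t := by
  intro t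
  have hd : ∀ (j : ℕ), j < p + 1 →
      HasDerivAt (iteratedDeriv j y) (iteratedDeriv (j+1) y t) t := by
    intro j hj
    have hdiff : DifferentiableAt ℝ (iteratedDeriv j y) t := by
      have := hy.differentiable_iteratedDeriv j
        (by exact_mod_cast Nat.cast_lt.mpr hj)
      exact this.differentiableAt
    have := hdiff.hasDerivAt
    rwa [show deriv (iteratedDeriv j y) t = iteratedDeriv (j+1) y t from by
      rw [iteratedDeriv_succ]] at this
  rw [hasDerivAt_pi]
  intro j
  rw [sysB_apply]
  by_cases h : (j : ℕ) + 1 < p + 1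
  · simp only [dif_pos h]
    exact hd (j : ℕ) j.isLt
  · simp only [dif_neg h]
    have hj : (j : ℕ) = p := by omega
    have hval : iteratedDeriv (p+1) y t
        = -∑ i : Fin (p+1), (A i t).mulVec (iteratedDeriv (i : ℕ) y t) :=
      eq_neg_of_add_eq_zero_left (heq t)
    simp only [hj]
    have := hd p (Nat.lt_succ_self p)
    rw [hval] at this
    exact this

end Correspond

section Final

theorem iteratedDeriv_zero_fun' {m : ℕ} (n : ℕ) :
    iteratedDeriv n (0 : ℝ → Fin m → ℂ) = 0 := by
  induction n with
  | zero => rw [iteratedDeriv_zero]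
  | succ n ih =>
    rw [iteratedDeriv_succ, ih]
    funext t
    exact deriv_const t 0

theorem iteratedDeriv_add' {m : ℕ} {n k : ℕ} (hk : k ≤ n) {y z : ℝ → Fin m → ℂ}
    (hy : ContDiff ℝ n y) (hz : ContDiff ℝ n z) (x : ℝ) :
    iteratedDeriv k (y + z) x = iteratedDeriv k y x + iteratedDeriv k z x := by
  rw [← iteratedDerivWithin_univ, ← iteratedDerivWithin_univ, ← iteratedDerivWithin_univ]
  exact iteratedDerivWithin_add (Set.mem_univ x) uniqueDiffOn_univ
    ((contDiffOn_univ.mpr (hy.of_le (by exact_mod_cast Nat.cast_le.mpr hk))).contDiffWithinAt (Set.mem_univ x))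
    ((contDiffOn_univ.mpr (hz.of_le (by exact_mod_cast Nat.cast_le.mpr hk))).contDiffWithinAt (Set.mem_univ x))

theorem iteratedDeriv_smul' {m : ℕ} {n k : ℕ} (hk : k ≤ n) (c : ℂ) {y : ℝ → Fin m → ℂ}
    (hy : ContDiff ℝ n y) (x : ℝ) :
    iteratedDeriv k (c • y) x = c • iteratedDeriv k y x := by
  rw [← iteratedDerivWithin_univ, ← iteratedDerivWithin_univ]
  exact iteratedDerivWithin_const_smul (Set.mem_univ x) uniqueDiffOn_univ c
    ((contDiffOn_univ.mpr (hy.of_le (by exact_mod_cast Nat.cast_le.mpr hk))).contDiffWithinAt (Set.mem_univ x))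


theorem sol_injective {m p : ℕ} (a : ℝ) (A : Fin (p+1) → ℝ → Matrix (Fin m) (Fin m) ℂ)
    (hA : ∀ j, Continuous (A j)) {y z : ℝ → Fin m → ℂ}
    (hy1 : ContDiff ℝ (p+1) y)
    (hy2 : ∀ t, iteratedDeriv (p+1) y t +
      ∑ j : Fin (p+1), (A j t).mulVec (iteratedDeriv (j : ℕ) y t) = 0)
    (hz1 : ContDiff ℝ (p+1) z)
    (hz2 : ∀ t, iteratedDeriv (p+1) z t +
      ∑ j : Fin (p+1), (A j t).mulVec (iteratedDeriv (j : ℕ) z t) = 0)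
    (h : ∀ j : Fin (p+1), iteratedDeriv (j : ℕ) y a = iteratedDeriv (j : ℕ) z a) :
    y = z := by
  have hFy := highOrder_to_system A hy1 hy2
  have hFz := highOrder_to_system A hz1 hz2
  have h0 : (fun j : Fin (p+1) => iteratedDeriv (j : ℕ) y a)
      = fun j : Fin (p+1) => iteratedDeriv (j : ℕ) z a := funext h
  have hFF := linearODE_unique_global (sysB A) (sysB_continuous A hA) a hFy hFz h0
  funext t
  have h2 := congr_fun (congr_fun hFF t) ⟨0, Nat.succ_pos p⟩
  simpa [iteratedDeriv_zero] using h2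

theorem sol_surjective {m p : ℕ} (a : ℝ) (A : Fin (p+1) → ℝ → Matrix (Fin m) (Fin m) ℂ)
    (hA : ∀ j, Continuous (A j)) (w : Fin (p+1) → Fin m → ℂ) :
    ∃ y : ℝ → Fin m → ℂ, (ContDiff ℝ (p+1) y ∧
      ∀ t, iteratedDeriv (p+1) y t +
        ∑ j : Fin (p+1), (A j t).mulVec (iteratedDeriv (j : ℕ) y t) = 0) ∧
      ∀ j : Fin (p+1), iteratedDeriv (j : ℕ) y a = w j := by
  obtain ⟨F, hFa, hFt⟩ := linearODE_global (sysB A) (sysB_continuous A hA) a w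
  obtain ⟨L2, hCD, hODE⟩ := system_to_highOrder A hA hFt
  refine ⟨fun t => F t ⟨0, Nat.succ_pos p⟩, ⟨hCD, hODE⟩, fun j => ?_⟩
  rw [L2 (j : ℕ) j.isLt]
  simp [hFa, Fin.eta]

theorem homogeneous_solution_space_isomorphic_to_initial_data'
    (m r : ℕ) (hm : 0 < m) (hr : 0 < r) (a : ℝ)
    (A : Fin r → ℝ → Matrix (Fin m) (Fin m) ℂ) (hA : ∀ j, Continuous (A j)) :
    ∃ S : Submodule ℂ (ℝ → Fin m → ℂ),
      (S : Set (ℝ → Fin m → ℂ)) =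
        {y | ContDiff ℝ r y ∧
          ∀ t, iteratedDeriv r y t +
            ∑ j : Fin r, (A j t).mulVec (iteratedDeriv (j : ℕ) y t) = 0} ∧
      Function.Bijective
        (fun y : S => fun j : Fin r => iteratedDeriv (j : ℕ) (y : ℝ → Fin m → ℂ) a) ∧
      Module.finrank ℂ S = r * m := by
  obtain ⟨p, rfl⟩ := Nat.exists_eq_succ_of_ne_zero hr.ne'
  set r := p + 1
  let S : Submodule ℂ (ℝ → Fin m → ℂ) :=
  { carrier := {y | ContDiff ℝ r y ∧
      ∀ t, iteratedDeriv r y t +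
        ∑ j : Fin r, (A j t).mulVec (iteratedDeriv (j : ℕ) y t) = 0}
    add_mem' := by
      rintro y z ⟨hy1, hy2⟩ ⟨hz1, hz2⟩
      refine ⟨hy1.add hz1, fun t => ?_⟩
      have e1 : ∀ j : Fin r, iteratedDeriv (j : ℕ) (y + z) t
          = iteratedDeriv (j : ℕ) y t + iteratedDeriv (j : ℕ) z t :=
        fun j => iteratedDeriv_add' (le_of_lt j.isLt) hy1 hz1 t
      rw [iteratedDeriv_add' le_rfl hy1 hz1 t]
      simp only [e1, Matrix.mulVec_add, Finset.sum_add_distrib]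
      have Hy := hy2 t
      have Hz := hz2 t
      generalize hS1 : ∑ j : Fin r, (A j t).mulVec (iteratedDeriv (j : ℕ) y t) = S1 at Hy ⊢
      generalize hS2 : ∑ j : Fin r, (A j t).mulVec (iteratedDeriv (j : ℕ) z t) = S2 at Hz ⊢
      rw [show iteratedDeriv r y t + iteratedDeriv r z t + (S1 + S2)
          = (iteratedDeriv r y t + S1) + (iteratedDeriv r z t + S2) from by abel,
        Hy, Hz, add_zero]
    zero_mem' := by
      refine ⟨contDiff_const, fun t => ?_⟩
      simp [iteratedDeriv_zero_fun']
    smul_mem' := by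
      rintro c y ⟨hy1, hy2⟩
      refine ⟨hy1.const_smul c, fun t => ?_⟩
      have e1 : ∀ j : Fin r, iteratedDeriv (j : ℕ) (c • y) t
          = c • iteratedDeriv (j : ℕ) y t :=
        fun j => iteratedDeriv_smul' (le_of_lt j.isLt) c hy1 t
      rw [iteratedDeriv_smul' le_rfl c hy1 t]
      simp only [e1, Matrix.mulVec_smul, ← Finset.smul_sum]
      rw [← smul_add, hy2 t, smul_zero] }
  have hmemS : ∀ y : S, ContDiff ℝ r (y : ℝ → Fin m → ℂ) ∧
      ∀ t, iteratedDeriv r (y : ℝ → Fin m → ℂ) t +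
        ∑ j : Fin r, (A j t).mulVec (iteratedDeriv (j : ℕ) (y : ℝ → Fin m → ℂ) t) = 0 :=
    fun y => y.2
  have hbij : Function.Bijective
      (fun y : S => fun j : Fin r => iteratedDeriv (j : ℕ) (y : ℝ → Fin m → ℂ) a) := by
    constructor
    · rintro y z h
      obtain ⟨hy1, hy2⟩ := hmemS y
      obtain ⟨hz1, hz2⟩ := hmemS z
      exact Subtype.ext (sol_injective a A hA hy1 hy2 hz1 hz2 fun j => congr_fun h j)
    · intro w
      obtain ⟨y, hmem', hj⟩ := sol_surjective a A hA w
      exact ⟨⟨y, hmem'⟩, funext hj⟩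
  refine ⟨S, rfl, hbij, ?_⟩
  let Φ : S →ₗ[ℂ] (Fin r → Fin m → ℂ) :=
    { toFun := fun y => fun j : Fin r => iteratedDeriv (j : ℕ) (y : ℝ → Fin m → ℂ) a
      map_add' := by
        rintro y z
        funext j
        exact iteratedDeriv_add' (le_of_lt j.isLt) (hmemS y).1 (hmemS z).1 a
      map_smul' := by
        rintro c y
        funext j
        exact iteratedDeriv_smul' (le_of_lt j.isLt) c (hmemS y).1 a }
  have hbijΦ : Function.Bijective Φ := hbij
  have hfr := (LinearEquiv.ofBijective Φ hbijΦ).finrank_eq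
  rw [hfr, Module.finrank_pi_fintype ℂ]
  simp [Module.finrank_fintype_fun_eq_card, mul_comm]
  left; rfl

end Final


/-- The set `S` of solutions of the homogeneous system
`y⁽ʳ⁾(t) + ∑_{j=1}^{r} A_{r-j}(t) y⁽ʳ⁻ʲ⁾(t) = 0` (with continuous coefficients)
is a ℂ-linear subspace of the functions `ℝ → ℂ^m`, the Cauchy map
`y ↦ (y(a), y'(a), …, y⁽ʳ⁻¹⁾(a))` is a bijection from `S` onto `ℂ^{rm}`,
and in particular `S` has dimension `r * m`. -/
theorem homogeneous_solution_space_isomorphic_to_initial_data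
    (m r : ℕ) (hm : 0 < m) (hr : 0 < r) (a : ℝ)
    (A : Fin r → ℝ → Matrix (Fin m) (Fin m) ℂ) (hA : ∀ j, Continuous (A j)) :
    ∃ S : Submodule ℂ (ℝ → Fin m → ℂ),
      (S : Set (ℝ → Fin m → ℂ)) =
        {y | ContDiff ℝ r y ∧
          ∀ t, iteratedDeriv r y t +
            ∑ j : Fin r, (A j t).mulVec (iteratedDeriv (j : ℕ) y t) = 0} ∧
      Function.Bijective
        (fun y : S => fun j : Fin r => iteratedDeriv (j : ℕ) (y : ℝ → Fin m → ℂ) a) ∧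
      Module.finrank ℂ S = r * m := by
  exact homogeneous_solution_space_isomorphic_to_initial_data' m r hm hr a A hA
end

section
/- Fix integers m, r, l ≥ 1, a point a ∈ ℝ, and continuous matrix-valued functions A₀, …, A_{r−1} : ℝ → ℂ^{m×m}. For i ∈ {1,…,r} let Y_i : ℝ → ℂ^{m×m} be r-times continuously differentiable matrix-valued functions satisfying Y_i^{(r)}(t) + Σ_{j=1}^{r} A_{r−j}(t) Y_i^{(r−j)}(t) = 0 for all t ∈ ℝ and Y_i^{(j−1)}(a) = δ_{ij} I_m for j ∈ {1,…,r}. Let B be a ℂ-linear map from the space of all functions ℝ → ℂ^m to ℂ^l, and let M := ([BY_1], …, [BY_r]) ∈ ℂ^{l×rm} be the characteristic matrix. Then the map y ↦ (y(a), y'(a), …, y^{(r−1)}(a)) is a ℂ-linear bijection from the space { y : ℝ → ℂ^m : y is r-times continuously differentiable, y^{(r)}(t) + Σ_{j=1}^{r} A_{r−j}(t) y^{(r−j)}(t) = 0 for all t ∈ ℝ, and By = 0 } onto ker M ⊆ ℂ^{rm}; in particular the dimension of this solution space equals dim ker M. -/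
attribute [local instance] Matrix.normedAddCommGroup Matrix.normedSpace

open Set

private lemma clm_iteratedDeriv {F G : Type*} [NormedAddCommGroup F] [NormedSpace ℝ F]
    [NormedAddCommGroup G] [NormedSpace ℝ G] (g : F →L[ℝ] G) {f : ℝ → F} {n i : ℕ}
    (hf : ContDiff ℝ n f) (hi : i ≤ n) (x : ℝ) :
    iteratedDeriv i (fun t => g (f t)) x = g (iteratedDeriv i f x) := by
  rw [iteratedDeriv_eq_iteratedFDeriv, iteratedDeriv_eq_iteratedFDeriv,
    show (fun t => g (f t)) = g ∘ f from rfl,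
    g.iteratedFDeriv_comp_left hf.contDiffAt (by exact_mod_cast hi)]
  rfl

section helpers
variable {m r : ℕ}

private lemma sum_mulVec' {ι : Type*} (s : Finset ι) (f : ι → Matrix (Fin m) (Fin m) ℂ)
    (v : Fin m → ℂ) : (∑ j ∈ s, f j).mulVec v = ∑ j ∈ s, (f j).mulVec v := by
  induction s using Finset.cons_induction with
  | empty => simp
  | cons a s ha ih => simp [Finset.sum_cons, Matrix.add_mulVec, ih]

private lemma mulVec_sum' {ι : Type*} (s : Finset ι) (A : Matrix (Fin m) (Fin m) ℂ)
    (v : ι → Fin m → ℂ) : A.mulVec (∑ j ∈ s, v j) = ∑ j ∈ s, A.mulVec (v j) := by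
  induction s using Finset.cons_induction with
  | empty => simp
  | cons a s ha ih => simp [Finset.sum_cons, Matrix.mulVec_add, ih]

private noncomputable def Lmap (m r : ℕ) (c : Fin r × Fin m → ℂ) :
    (Fin r → Matrix (Fin m) (Fin m) ℂ) →L[ℝ] (Fin m → ℂ) :=
  LinearMap.toContinuousLinearMap
    { toFun := fun W => ∑ i : Fin r, (W i).mulVec (fun j => c (i, j))
      map_add' := by
        intro W W'
        simp [Matrix.add_mulVec, Finset.sum_add_distrib]
      map_smul' := by
        intro a W
        simp [Matrix.smul_mulVec, Finset.smul_sum] }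

private lemma Lmap_apply (c : Fin r × Fin m → ℂ) (W : Fin r → Matrix (Fin m) (Fin m) ℂ) :
    Lmap m r c W = ∑ i : Fin r, (W i).mulVec (fun j => c (i, j)) := rfl

private noncomputable def Phi (m r : ℕ) (Y : Fin r → ℝ → Matrix (Fin m) (Fin m) ℂ)
    (c : Fin r × Fin m → ℂ) : ℝ → Fin m → ℂ :=
  fun t => ∑ i : Fin r, (Y i t).mulVec (fun j => c (i, j))

private lemma Phi_iteratedDeriv (Y : Fin r → ℝ → Matrix (Fin m) (Fin m) ℂ)
    (hY : ∀ i, ContDiff ℝ r (Y i)) (c : Fin r × Fin m → ℂ) {k : ℕ} (hk : k ≤ r) (t : ℝ) :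
    iteratedDeriv k (Phi m r Y c) t =
      ∑ i : Fin r, (iteratedDeriv k (Y i) t).mulVec (fun j => c (i, j)) := by
  have hYY : ContDiff ℝ r (fun t => fun i => Y i t) := contDiff_pi.2 hY
  have h1 : Phi m r Y c = fun t => Lmap m r c ((fun t (i : Fin r) => Y i t) t) := rfl
  rw [h1]
  beta_reduce
  refine (clm_iteratedDeriv (Lmap m r c) hYY hk t).trans ?_
  refine (Lmap_apply c _).trans ?_
  refine Finset.sum_congr rfl fun i _ => ?_
  have h2 := clm_iteratedDeriv
    (ContinuousLinearMap.proj (R := ℝ) (φ := fun _ : Fin r => Matrix (Fin m) (Fin m) ℂ) i)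
    hYY hk t
  have h2' : iteratedDeriv k (Y i) t = iteratedDeriv k (fun t (i' : Fin r) => Y i' t) t i := by
    exact h2
  rw [h2']

private lemma Phi_contDiff (Y : Fin r → ℝ → Matrix (Fin m) (Fin m) ℂ)
    (hY : ∀ i, ContDiff ℝ r (Y i)) (c : Fin r × Fin m → ℂ) :
    ContDiff ℝ r (Phi m r Y c) := by
  have hYY : ContDiff ℝ r (fun t => fun i : Fin r => Y i t) := contDiff_pi.2 hY
  exact ((Lmap m r c).contDiff.of_le le_top).comp hYY

end helpers

private noncomputable def vf (m r : ℕ) (A : Fin r → ℝ → Matrix (Fin m) (Fin m) ℂ) (t : ℝ)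
    (x : Fin r × Fin m → ℂ) : Fin r × Fin m → ℂ := fun p =>
  if h : (p.1 : ℕ) + 1 < r then x (⟨(p.1 : ℕ) + 1, h⟩, p.2)
  else -(∑ k : Fin r, ((A k t).mulVec (fun j => x (k, j))) p.2)

private lemma vf_sub (m r : ℕ) (A : Fin r → ℝ → Matrix (Fin m) (Fin m) ℂ) (t : ℝ)
    (x y : Fin r × Fin m → ℂ) : vf m r A t x - vf m r A t y = vf m r A t (x - y) := by
  funext p
  rw [Pi.sub_apply]
  unfold vf
  split_ifs with h
  · rfl
  · have hk : ∀ k : Fin r, (fun j => x (k, j) - y (k, j)) =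
        ((fun j => x (k, j)) - fun j => y (k, j)) := fun k => rfl
    simp only [Pi.sub_apply, hk, Matrix.mulVec_sub, Finset.sum_sub_distrib]
    ring

private lemma vf_norm_le (m r : ℕ) (A : Fin r → ℝ → Matrix (Fin m) (Fin m) ℂ) (s : ℝ)
    (C : ℝ) (hC : 1 + ∑ k : Fin r, ∑ i : Fin m, ∑ j : Fin m, ‖A k s i j‖ ≤ C)
    (x : Fin r × Fin m → ℂ) : ‖vf m r A s x‖ ≤ C * ‖x‖ := by
  have hC1 : (1:ℝ) ≤ C := le_trans (le_add_of_nonneg_right (by positivity)) hC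
  have hC0 : (0:ℝ) ≤ C := le_trans zero_le_one hC1
  rw [pi_norm_le_iff_of_nonneg (by positivity)]
  rintro ⟨i, j⟩
  unfold vf
  by_cases h : (i : ℕ) + 1 < r
  · rw [dif_pos h]
    calc ‖x (⟨(i:ℕ)+1, h⟩, j)‖ ≤ ‖x‖ := norm_le_pi_norm x _
      _ = 1 * ‖x‖ := (one_mul _).symm
      _ ≤ C * ‖x‖ := by gcongr
  · rw [dif_neg h, norm_neg]
    have hrow : ∀ k : Fin r, ‖((A k s).mulVec (fun j' => x (k, j'))) j‖ ≤
        (∑ j' : Fin m, ‖A k s j j'‖) * ‖x‖ := by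
      intro k
      simp only [Matrix.mulVec, dotProduct]
      calc ‖∑ j' : Fin m, A k s j j' * x (k, j')‖
          ≤ ∑ j' : Fin m, ‖A k s j j' * x (k, j')‖ := norm_sum_le _ _
        _ ≤ ∑ j' : Fin m, ‖A k s j j'‖ * ‖x‖ := by
            refine Finset.sum_le_sum fun j' _ => ?_
            rw [norm_mul]
            exact mul_le_mul_of_nonneg_left (norm_le_pi_norm x _) (norm_nonneg _)
        _ = (∑ j' : Fin m, ‖A k s j j'‖) * ‖x‖ := by rw [Finset.sum_mul]
    calc ‖∑ k : Fin r, ((A k s).mulVec (fun j' => x (k, j'))) j‖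
        ≤ ∑ k : Fin r, ‖((A k s).mulVec (fun j' => x (k, j'))) j‖ := norm_sum_le _ _
      _ ≤ ∑ k : Fin r, (∑ j' : Fin m, ‖A k s j j'‖) * ‖x‖ :=
          Finset.sum_le_sum fun k _ => hrow k
      _ = (∑ k : Fin r, ∑ j' : Fin m, ‖A k s j j'‖) * ‖x‖ := by rw [Finset.sum_mul]
      _ ≤ C * ‖x‖ := by
          refine mul_le_mul_of_nonneg_right ?_ (norm_nonneg _)
          refine le_trans ?_ hC
          have hs : ∀ k : Fin r, (∑ j' : Fin m, ‖A k s j j'‖) ≤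
              ∑ i' : Fin m, ∑ j' : Fin m, ‖A k s i' j'‖ :=
            fun k => Finset.single_le_sum (f := fun i' => ∑ j' : Fin m, ‖A k s i' j'‖)
              (fun i' _ => by positivity) (Finset.mem_univ j)
          have := Finset.sum_le_sum (s := Finset.univ) fun k (_ : k ∈ Finset.univ) => hs k
          linarith

private lemma vf_deriv (m r : ℕ) (A : Fin r → ℝ → Matrix (Fin m) (Fin m) ℂ)
    (y : ℝ → Fin m → ℂ) (hy : ContDiff ℝ r y)
    (hode : ∀ t, iteratedDeriv r y t +
        ∑ j : Fin r, (A j t).mulVec (iteratedDeriv (j : ℕ) y t) = 0) (t : ℝ) :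
    HasDerivAt (fun s (p : Fin r × Fin m) => iteratedDeriv (p.1 : ℕ) y s p.2)
      (vf m r A t (fun p : Fin r × Fin m => iteratedDeriv (p.1 : ℕ) y t p.2)) t := by
  rw [hasDerivAt_pi]
  rintro ⟨i, j⟩
  have hdi : HasDerivAt (iteratedDeriv (i : ℕ) y) (iteratedDeriv ((i : ℕ) + 1) y t) t := by
    have hd := (hy.differentiable_iteratedDeriv (i : ℕ)
      (by exact_mod_cast i.isLt)).differentiableAt (x := t)
    simpa [iteratedDeriv_succ] using hd.hasDerivAt
  have hcomp := hasDerivAt_pi.1 hdi j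
  convert hcomp using 1
  show vf m r A t _ (i, j) = _
  unfold vf
  by_cases h : (i : ℕ) + 1 < r
  · rw [dif_pos h]
  · have hir : (i : ℕ) + 1 = r := le_antisymm i.isLt (not_lt.1 h)
    have hrec : iteratedDeriv r y t =
        -(∑ k : Fin r, (A k t).mulVec (iteratedDeriv (k : ℕ) y t)) :=
      eq_neg_of_add_eq_zero_left (hode t)
    rw [dif_neg h, hir, hrec]
    simp

lemma ode_unique (m r : ℕ) (hr : 0 < r)
    (A : Fin r → ℝ → Matrix (Fin m) (Fin m) ℂ) (hA : ∀ j, Continuous (A j))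
    (y₁ y₂ : ℝ → Fin m → ℂ) (h₁ : ContDiff ℝ r y₁) (h₂ : ContDiff ℝ r y₂)
    (hode₁ : ∀ t, iteratedDeriv r y₁ t +
        ∑ j : Fin r, (A j t).mulVec (iteratedDeriv (j : ℕ) y₁ t) = 0)
    (hode₂ : ∀ t, iteratedDeriv r y₂ t +
        ∑ j : Fin r, (A j t).mulVec (iteratedDeriv (j : ℕ) y₂ t) = 0)
    (a : ℝ)
    (hinit : ∀ i : Fin r, iteratedDeriv (i : ℕ) y₁ a = iteratedDeriv (i : ℕ) y₂ a) :
    y₁ = y₂ := by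
  classical
  suffices hS : ∀ b : ℝ, (fun p : Fin r × Fin m => iteratedDeriv (p.1 : ℕ) y₁ b p.2) =
      (fun p : Fin r × Fin m => iteratedDeriv (p.1 : ℕ) y₂ b p.2) by
    funext t j
    have := congrFun (hS t) (⟨0, hr⟩, j)
    simpa [iteratedDeriv_zero] using this
  intro b
  obtain ⟨c, d, hac, had, hbc, hbd⟩ : ∃ c d : ℝ, c < a ∧ a < d ∧ c ≤ b ∧ b ≤ d := by
    refine ⟨min a b - 1, max a b + 1, ?_, ?_, ?_, ?_⟩
    · have := min_le_left a b; linarith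
    · have := le_max_left a b; linarith
    · have := min_le_right a b; linarith
    · have := le_max_right a b; linarith
  have hcd : c ≤ d := le_trans hac.le had.le
  -- clamped vector field
  have hτ_mem : ∀ t : ℝ, max c (min d t) ∈ Icc c d := fun t =>
    ⟨le_max_left _ _, max_le hcd (min_le_left _ _)⟩
  have hτ_eq : ∀ t ∈ Ioo c d, max c (min d t) = t := by
    intro t ht
    rw [min_eq_right ht.2.le, max_eq_right ht.1.le]
  -- uniform bound
  have hg_cont : Continuous (fun s : ℝ =>
      1 + ∑ k : Fin r, ∑ i : Fin m, ∑ j : Fin m, ‖A k s i j‖) := by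
    apply continuous_const.add
    refine continuous_finset_sum _ fun k _ => continuous_finset_sum _ fun i _ =>
      continuous_finset_sum _ fun j _ => ?_
    exact ((continuous_apply j).comp ((continuous_apply i).comp (hA k))).norm
  obtain ⟨s₀, _, hs₀⟩ := (isCompact_Icc (a := c) (b := d)).exists_isMaxOn
    ⟨c, le_refl c, hcd⟩ (hg_cont.continuousOn (s := Icc c d))
  set C : ℝ := 1 + ∑ k : Fin r, ∑ i : Fin m, ∑ j : Fin m, ‖A k s₀ i j‖ with hC_def
  have hC0 : (0:ℝ) ≤ C := by rw [hC_def]; positivity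
  have hlip : ∀ t, LipschitzOnWith C.toNNReal (vf m r A (max c (min d t))) univ := by
    intro t
    apply LipschitzOnWith.of_dist_le_mul
    intro x _ y _
    rw [dist_eq_norm, dist_eq_norm, vf_sub]
    calc ‖vf m r A _ (x - y)‖ ≤ C * ‖x - y‖ :=
          vf_norm_le m r A _ C (hs₀ (hτ_mem t)) _
      _ = (C.toNNReal : ℝ) * ‖x - y‖ := by rw [Real.coe_toNNReal C hC0]
  have heq : EqOn (fun s (p : Fin r × Fin m) => iteratedDeriv (p.1 : ℕ) y₁ s p.2)
      (fun s (p : Fin r × Fin m) => iteratedDeriv (p.1 : ℕ) y₂ s p.2) (Icc c d) := by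
    refine ODE_solution_unique_of_mem_Icc (s := fun _ => univ) (fun t _ => hlip t) ⟨hac, had⟩
      (fun t _ => (vf_deriv m r A y₁ h₁ hode₁ t).continuousAt.continuousWithinAt)
      (fun t ht => by
        rw [hτ_eq t ht]
        exact vf_deriv m r A y₁ h₁ hode₁ t)
      (fun _ _ => trivial)
      (fun t _ => (vf_deriv m r A y₂ h₂ hode₂ t).continuousAt.continuousWithinAt)
      (fun t ht => by
        rw [hτ_eq t ht]
        exact vf_deriv m r A y₂ h₂ hode₂ t)
      (fun _ _ => trivial) ?_
    funext p
    exact congrFun (hinit p.1) p.2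
  exact heq ⟨hbc, hbd⟩

/-- Let `Y₁, …, Y_r` be the fundamental matrix solutions of the homogeneous system,
`B` a ℂ-linear map from functions `ℝ → ℂ^m` to `ℂ^l`, and
`M = ([BY₁], …, [BY_r])` the characteristic matrix. Then the Cauchy map
`y ↦ (y(a), …, y⁽ʳ⁻¹⁾(a))` is a ℂ-linear bijection from the space of solutions of
the homogeneous boundary-value problem onto `ker M`; in particular the dimension
of the solution space equals `dim ker M`. -/
theorem kernel_of_problem_isomorphic_to_kernel_of_characteristic_matrix
    (m r l : ℕ) (hm : 0 < m) (hr : 0 < r) (hl : 0 < l) (a : ℝ)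
    (A : Fin r → ℝ → Matrix (Fin m) (Fin m) ℂ) (hA : ∀ j, Continuous (A j))
    (Y : Fin r → ℝ → Matrix (Fin m) (Fin m) ℂ)
    (hYsmooth : ∀ i, ContDiff ℝ r (Y i))
    (hYode : ∀ i t, iteratedDeriv r (Y i) t +
        ∑ j : Fin r, A j t * iteratedDeriv (j : ℕ) (Y i) t = 0)
    (hYinit : ∀ i j : Fin r,
        iteratedDeriv (j : ℕ) (Y i) a = if i = j then (1 : Matrix (Fin m) (Fin m) ℂ) else 0)
    (B : (ℝ → Fin m → ℂ) →ₗ[ℂ] (Fin l → ℂ))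
    (M : Matrix (Fin l) (Fin r × Fin m) ℂ)
    (hM : ∀ (q : Fin l) (i : Fin r) (j : Fin m),
        M q (i, j) = B (fun t => fun p => Y i t p j) q) :
    Set.BijOn (fun (y : ℝ → Fin m → ℂ) (p : Fin r × Fin m) => iteratedDeriv (p.1 : ℕ) y a p.2)
      {y : ℝ → Fin m → ℂ | ContDiff ℝ r y ∧
        (∀ t, iteratedDeriv r y t +
          ∑ j : Fin r, (A j t).mulVec (iteratedDeriv (j : ℕ) y t) = 0) ∧ B y = 0}
      (LinearMap.ker M.mulVecLin : Set (Fin r × Fin m → ℂ)) ∧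
    ∃ S : Submodule ℂ (ℝ → Fin m → ℂ),
      (S : Set (ℝ → Fin m → ℂ)) =
        {y : ℝ → Fin m → ℂ | ContDiff ℝ r y ∧
          (∀ t, iteratedDeriv r y t +
            ∑ j : Fin r, (A j t).mulVec (iteratedDeriv (j : ℕ) y t) = 0) ∧ B y = 0} ∧
      Module.finrank ℂ S = Module.finrank ℂ (LinearMap.ker M.mulVecLin) := by
  classical
  -- initial data of Phi
  have hinitΦ : ∀ (c : Fin r × Fin m → ℂ) (k : Fin r),
      iteratedDeriv (k : ℕ) (Phi m r Y c) a = fun j => c (k, j) := by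
    intro c k
    rw [Phi_iteratedDeriv Y hYsmooth c (le_of_lt k.isLt) a]
    have h1 : ∀ i : Fin r, (iteratedDeriv (k : ℕ) (Y i) a).mulVec (fun j => c (i, j)) =
        if i = k then (fun j => c (k, j)) else 0 := by
      intro i
      rw [hYinit i k]
      split_ifs with h
      · rw [Matrix.one_mulVec, h]
      · rw [Matrix.zero_mulVec]
    rw [Finset.sum_congr rfl fun i _ => h1 i]
    simp
  have hcauchyΦ : ∀ c, (fun p : Fin r × Fin m =>
      iteratedDeriv (p.1 : ℕ) (Phi m r Y c) a p.2) = c := by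
    intro c
    funext p
    rw [hinitΦ c p.1]
  -- Phi solves the ODE
  have hodeΦ : ∀ c t, iteratedDeriv r (Phi m r Y c) t +
      ∑ j : Fin r, (A j t).mulVec (iteratedDeriv (j : ℕ) (Phi m r Y c) t) = 0 := by
    intro c t
    rw [Phi_iteratedDeriv Y hYsmooth c le_rfl t]
    have hterm : ∀ j : Fin r, (A j t).mulVec (iteratedDeriv (j : ℕ) (Phi m r Y c) t)
        = ∑ i : Fin r, ((A j t) * iteratedDeriv (j : ℕ) (Y i) t).mulVec (fun jj => c (i, jj)) := by
      intro j
      rw [Phi_iteratedDeriv Y hYsmooth c (le_of_lt j.isLt) t, mulVec_sum']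
      exact Finset.sum_congr rfl fun i _ => Matrix.mulVec_mulVec _ _ _
    rw [Finset.sum_congr rfl fun j _ => hterm j, Finset.sum_comm, ← Finset.sum_add_distrib]
    have hzero : ∀ i : Fin r,
        (iteratedDeriv r (Y i) t).mulVec (fun jj => c (i, jj)) +
        ∑ j : Fin r, ((A j t) * iteratedDeriv (j : ℕ) (Y i) t).mulVec (fun jj => c (i, jj)) = 0 := by
      intro i
      rw [← sum_mulVec', ← Matrix.add_mulVec, hYode i t, Matrix.zero_mulVec]
    rw [Finset.sum_congr rfl fun i _ => hzero i]
    simp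
  -- B of Phi
  have hBΦ : ∀ c, B (Phi m r Y c) = M.mulVec c := by
    intro c
    have hdecomp : Phi m r Y c =
        ∑ p : Fin r × Fin m, c p • (fun t q => Y p.1 t q p.2) := by
      funext t j
      simp only [Phi, Finset.sum_apply, Matrix.mulVec, dotProduct, Pi.smul_apply,
        smul_eq_mul, Fintype.sum_prod_type]
      exact Finset.sum_congr rfl fun i _ => Finset.sum_congr rfl fun j' _ => mul_comm _ _
    rw [hdecomp, map_sum]
    funext q
    simp only [map_smul, Finset.sum_apply, Pi.smul_apply, smul_eq_mul]
    rw [Matrix.mulVec, dotProduct]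
    refine Finset.sum_congr rfl fun p _ => ?_
    rw [← hM q p.1 p.2, mul_comm]
  -- uniqueness wrapper
  have huniq : ∀ y : ℝ → Fin m → ℂ, ContDiff ℝ r y →
      (∀ t, iteratedDeriv r y t +
        ∑ j : Fin r, (A j t).mulVec (iteratedDeriv (j : ℕ) y t) = 0) →
      y = Phi m r Y (fun p : Fin r × Fin m => iteratedDeriv (p.1 : ℕ) y a p.2) := by
    intro y hy hode
    refine ode_unique m r hr A hA y _ hy (Phi_contDiff Y hYsmooth _) hode (hodeΦ _) a ?_
    intro i
    rw [hinitΦ _ i]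
  -- membership in the kernel for solutions
  have hker : ∀ y : ℝ → Fin m → ℂ, ContDiff ℝ r y →
      (∀ t, iteratedDeriv r y t +
        ∑ j : Fin r, (A j t).mulVec (iteratedDeriv (j : ℕ) y t) = 0) → B y = 0 →
      M.mulVecLin (fun p : Fin r × Fin m => iteratedDeriv (p.1 : ℕ) y a p.2) = 0 := by
    intro y hy hode hBy
    rw [Matrix.mulVecLin_apply, ← hBΦ, ← huniq y hy hode, hBy]
  constructor
  · refine ⟨?_, ?_, ?_⟩
    · rintro y ⟨hy, hode, hBy⟩
      simp only [SetLike.mem_coe, LinearMap.mem_ker]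
      exact hker y hy hode hBy
    · rintro y₁ ⟨hy₁, hode₁, _⟩ y₂ ⟨hy₂, hode₂, _⟩ h
      exact (huniq y₁ hy₁ hode₁).trans ((congrArg (Phi m r Y) h).trans (huniq y₂ hy₂ hode₂).symm)
    · intro c hc
      have hc' : M.mulVec c = 0 := by
        have := LinearMap.mem_ker.1 (SetLike.mem_coe.1 hc)
        rwa [Matrix.mulVecLin_apply] at this
      exact ⟨Phi m r Y c, ⟨Phi_contDiff Y hYsmooth c, hodeΦ c, by rw [hBΦ c, hc']⟩, hcauchyΦ c⟩
  · -- the submodule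
    have hadd : ∀ c c' : Fin r × Fin m → ℂ,
        Phi m r Y (c + c') = Phi m r Y c + Phi m r Y c' := by
      intro c c'
      funext t j
      simp [Phi, Matrix.mulVec, dotProduct, mul_add, Finset.sum_add_distrib]
    have hsmul : ∀ (z : ℂ) (c : Fin r × Fin m → ℂ), Phi m r Y (z • c) = z • Phi m r Y c := by
      intro z c
      funext t j
      simp only [Phi, Finset.sum_apply, Matrix.mulVec, dotProduct, Pi.smul_apply,
        smul_eq_mul, Finset.mul_sum]
      exact Finset.sum_congr rfl fun i _ => Finset.sum_congr rfl fun j' _ => mul_left_comm _ _ _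
    set Φₗ : (Fin r × Fin m → ℂ) →ₗ[ℂ] (ℝ → Fin m → ℂ) :=
      { toFun := Phi m r Y
        map_add' := hadd
        map_smul' := hsmul } with hΦₗ_def
    refine ⟨Submodule.map Φₗ (LinearMap.ker M.mulVecLin), ?_, ?_⟩
    · ext y
      simp only [SetLike.mem_coe, Submodule.mem_map, LinearMap.mem_ker, Set.mem_setOf_eq]
      constructor
      · rintro ⟨c, hc, rfl⟩
        have hc' : M.mulVec c = 0 := by rwa [Matrix.mulVecLin_apply] at hc
        exact ⟨Phi_contDiff Y hYsmooth c, hodeΦ c, by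
          show B (Phi m r Y c) = 0
          rw [hBΦ c, hc']⟩
      · rintro ⟨hy, hode, hBy⟩
        exact ⟨fun p : Fin r × Fin m => iteratedDeriv (p.1 : ℕ) y a p.2,
          hker y hy hode hBy, (huniq y hy hode).symm⟩
    · have hinj : Function.Injective Φₗ := by
        intro c₁ c₂ h
        have h' : Phi m r Y c₁ = Phi m r Y c₂ := h
        calc c₁ = (fun p : Fin r × Fin m => iteratedDeriv (p.1 : ℕ) (Phi m r Y c₁) a p.2) :=
              (hcauchyΦ c₁).symm
          _ = (fun p : Fin r × Fin m => iteratedDeriv (p.1 : ℕ) (Phi m r Y c₂) a p.2) := by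
              rw [h']
          _ = c₂ := hcauchyΦ c₂
      exact (LinearEquiv.finrank_eq
        (Submodule.equivMapOfInjective Φₗ hinj (LinearMap.ker M.mulVecLin))).symm
end

section
/- Fix real numbers a < b and integers m, r, l ≥ 1. For y : ℝ → ℂ^m that is (r−1)-times continuously differentiable, let J(y) ∈ C([a,b], ℂ^{rm}) denote its jet, J(y)(t) = (y(t), y'(t), …, y^{(r−1)}(t)). For a continuous linear operator B : C([a,b], ℂ^{rm}) → ℂ^l and fundamental matrix solutions Y₁, …, Y_r, let M ∈ ℂ^{l×rm} be the characteristic matrix whose column indexed by (i,j) (i ∈ {1,…,r}, j ∈ {1,…,m}) is B(J(y_{ij})), where y_{ij} is the j-th column of Y_i. For k ∈ ℕ let A₀(·,k), …, A_{r−1}(·,k) and A₀, …, A_{r−1} : ℝ → ℂ^{m×m} be continuous with sup_{t∈[a,b]} ‖A_j(t,k) − A_j(t)‖ → 0 for each j, let Y_i(·,k) and Y_i be the corresponding fundamental matrix solutions with initial data Y^{(j−1)}(a) = δ_{ij} I_m, and let B_k, B : C([a,b], ℂ^{rm}) → ℂ^l be continuous linear operators with B_k u → B u for every u ∈ C([a,b],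 ℂ^{rm}). Then the characteristic matrices M_k (built from Y_i(·,k) and B_k) converge entrywise to the characteristic matrix M (built from Y_i and B) as k → ∞. -/
attribute [local instance] Matrix.normedAddCommGroup Matrix.normedSpace

open scoped Classical in
/-- The jet `J(y) = (y, y', …, y⁽ʳ⁻¹⁾)` of a function `y : ℝ → ℂ^m`, as a continuous
map on `[a,b]` with values in `ℂ^{rm}` (junk value `0` if the jet fails to be
continuous, which does not happen for `(r-1)`-times continuously differentiable `y`). -/
noncomputable def jetCM (a b : ℝ) {m : ℕ} (r : ℕ) (y : ℝ → Fin m → ℂ) :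
    C(Set.Icc a b, Fin r × Fin m → ℂ) :=
  if h : Continuous fun t : Set.Icc a b =>
      fun p : Fin r × Fin m => iteratedDeriv (p.1 : ℕ) y t.1 p.2
  then ⟨_, h⟩ else 0

/-- The characteristic matrix `M(L,B) = ([BY₁], …, [BY_r]) ∈ ℂ^{l × rm}`: its column
indexed by `(i,j)` is `B` applied to the jet of the `j`-th column of `Y_i`. -/
noncomputable def charMatrix {m r l : ℕ} (a b : ℝ)
    (B : C(Set.Icc a b, Fin r × Fin m → ℂ) →L[ℂ] (Fin l → ℂ))
    (Y : Fin r → ℝ → Matrix (Fin m) (Fin m) ℂ) :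
    Matrix (Fin l) (Fin r × Fin m) ℂ :=
  Matrix.of fun (q : Fin l) (p : Fin r × Fin m) =>
    B (jetCM a b r (fun t v => Y p.1 t v p.2)) q


section aux
variable {F G : Type*} [NormedAddCommGroup F] [NormedSpace ℝ F]
  [NormedAddCommGroup G] [NormedSpace ℝ G]

lemma my_iteratedDeriv_sub {n : ℕ} {f g : ℝ → F} (hf : ContDiff ℝ n f) (hg : ContDiff ℝ n g)
    (x : ℝ) : iteratedDeriv n (fun s => f s - g s) x = iteratedDeriv n f x - iteratedDeriv n g x := by
  rw [show (fun s => f s - g s) = f - g from rfl, ← iteratedDerivWithin_univ,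
    ← iteratedDerivWithin_univ, ← iteratedDerivWithin_univ]
  exact iteratedDerivWithin_sub (Set.mem_univ x) uniqueDiffOn_univ hf.contDiffWithinAt hg.contDiffWithinAt

lemma my_iteratedDeriv_clm (g : F →L[ℝ] G) {N : ℕ} {f : ℝ → F} (hf : ContDiff ℝ N f)
    {n : ℕ} (hn : n ≤ N) (t : ℝ) :
    iteratedDeriv n (fun s => g (f s)) t = g (iteratedDeriv n f t) := by
  induction n generalizing t with
  | zero => simp
  | succ n ih =>
    have hfd : Differentiable ℝ (iteratedDeriv n f) :=
      hf.differentiable_iteratedDeriv n (by exact_mod_cast Nat.lt_of_succ_le hn)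
    have h1 : iteratedDeriv n (fun s => g (f s)) = fun s => g (iteratedDeriv n f s) :=
      funext fun s => ih (Nat.le_of_succ_le hn) s
    rw [iteratedDeriv_succ, h1, iteratedDeriv_succ]
    exact (g.hasFDerivAt.comp_hasDerivAt t ((hfd t).hasDerivAt)).deriv

lemma my_norm_mul_le {m : ℕ} (A B : Matrix (Fin m) (Fin m) ℂ) : ‖A * B‖ ≤ m * ‖A‖ * ‖B‖ := by
  have h0 : (0:ℝ) ≤ m * ‖A‖ * ‖B‖ := by positivity
  rw [Matrix.norm_le_iff h0]
  intro i j
  rw [Matrix.mul_apply]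
  calc ‖∑ k, A i k * B k j‖ ≤ ∑ k, ‖A i k * B k j‖ := norm_sum_le _ _
    _ ≤ ∑ _k : Fin m, ‖A‖ * ‖B‖ := Finset.sum_le_sum fun k _ => by
        rw [norm_mul]
        exact mul_le_mul (Matrix.norm_entry_le_entrywise_sup_norm A)
          (Matrix.norm_entry_le_entrywise_sup_norm B) (norm_nonneg _) (norm_nonneg _)
    _ = m * ‖A‖ * ‖B‖ := by
        rw [Finset.sum_const, Finset.card_univ, Fintype.card_fin, nsmul_eq_mul]; ring

end aux

set_option maxHeartbeats 1000000 in
lemma key_conv {m r : ℕ} (hm : 0 < m) (hr : 0 < r) {a b : ℝ} (hab : a < b)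
    (A : Fin r → ℝ → Matrix (Fin m) (Fin m) ℂ) (hA : ∀ j, Continuous (A j))
    (Aseq : ℕ → Fin r → ℝ → Matrix (Fin m) (Fin m) ℂ)
    (hAconv : ∀ j, TendstoUniformlyOn (fun k t => Aseq k j t) (A j) Filter.atTop (Set.Icc a b))
    (Y : ℝ → Matrix (Fin m) (Fin m) ℂ) (Yk : ℕ → ℝ → Matrix (Fin m) (Fin m) ℂ)
    (hY : ContDiff ℝ r Y) (hYk : ∀ k, ContDiff ℝ r (Yk k))
    (hode : ∀ t, iteratedDeriv r Y t + ∑ j : Fin r, A j t * iteratedDeriv (j : ℕ) Y t = 0)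
    (hodek : ∀ k t, iteratedDeriv r (Yk k) t
      + ∑ j : Fin r, Aseq k j t * iteratedDeriv (j : ℕ) (Yk k) t = 0)
    (hinit : ∀ k, ∀ j : Fin r, iteratedDeriv (j : ℕ) (Yk k) a = iteratedDeriv (j : ℕ) Y a)
    {ε : ℝ} (hε : 0 < ε) :
    ∀ᶠ k in Filter.atTop, ∀ t ∈ Set.Icc a b, ∀ j : Fin r,
      ‖iteratedDeriv (j : ℕ) (Yk k) t - iteratedDeriv (j : ℕ) Y t‖ ≤ ε := by
  classical
  -- bound on the coefficients
  obtain ⟨CA, hCA⟩ := isCompact_Icc.exists_bound_of_continuousOn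
    (f := fun t (j : Fin r) => A j t)
    (Continuous.continuousOn (continuous_pi fun j => hA j))
  set CA0 : ℝ := max CA 0 with hCA0def
  have hCA0 : 0 ≤ CA0 := le_max_right _ _
  have hCAb : ∀ (j : Fin r), ∀ t ∈ Set.Icc a b, ‖A j t‖ ≤ CA0 := fun j t ht =>
    (norm_le_pi_norm (fun j : Fin r => A j t) j).trans ((hCA t ht).trans (le_max_left _ _))
  -- bound on the derivatives of Y
  have hYder : ∀ j : Fin r, Continuous (iteratedDeriv (j : ℕ) Y) := fun j =>
    hY.continuous_iteratedDeriv (j : ℕ) (by exact_mod_cast j.isLt.le)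
  obtain ⟨CY, hCY⟩ := isCompact_Icc.exists_bound_of_continuousOn
    (f := fun t (j : Fin r) => iteratedDeriv (j : ℕ) Y t)
    (Continuous.continuousOn (continuous_pi fun j => hYder j))
  set CY0 : ℝ := max CY 0 with hCY0def
  have hCY0 : 0 ≤ CY0 := le_max_right _ _
  have hCYb : ∀ (j : Fin r), ∀ t ∈ Set.Icc a b, ‖iteratedDeriv (j : ℕ) Y t‖ ≤ CY0 := fun j t ht =>
    (norm_le_pi_norm (fun j : Fin r => iteratedDeriv (j : ℕ) Y t) j).trans
      ((hCY t ht).trans (le_max_left _ _))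
  -- constants
  set K : ℝ := 1 + r * m * (CA0 + 1) with hKdef
  have hrm : (0:ℝ) < (r:ℝ) * m := by positivity
  have hK1 : (1:ℝ) ≤ K := by nlinarith
  have hK : (0:ℝ) < K := lt_of_lt_of_le one_pos hK1
  set E : ℝ := Real.exp (K * (b - a)) with hEdef
  have hE : (0:ℝ) < E := Real.exp_pos _
  set P : ℝ := (r:ℝ) * m * (CY0 + 1) with hPdef
  have hP : (0:ℝ) < P := by nlinarith
  set η : ℝ := min 1 (ε * K / (E * P)) with hηdef
  have hη : 0 < η := lt_min one_pos (by positivity)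
  have hη1 : η ≤ 1 := min_le_left _ _
  have hη2 : η ≤ ε * K / (E * P) := min_le_right _ _
  -- eventually the coefficients are η-close
  have hev : ∀ᶠ k in Filter.atTop, ∀ j : Fin r, ∀ t ∈ Set.Icc a b,
      ‖Aseq k j t - A j t‖ ≤ η := by
    rw [Filter.eventually_all]
    intro j
    filter_upwards [(Metric.tendstoUniformlyOn_iff.1 (hAconv j)) η hη] with k hk t ht
    have := hk t ht
    rw [dist_comm, dist_eq_norm] at this
    exact this.le
  filter_upwards [hev] with k hk
  -- the difference and its derivatives
  set Dk : ℝ → Matrix (Fin m) (Fin m) ℂ := fun s => Yk k s - Y s with hDkdef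
  have hDk : ContDiff ℝ r Dk := (hYk k).sub hY
  have hsub : ∀ n : ℕ, n ≤ r → ∀ t,
      iteratedDeriv n Dk t = iteratedDeriv n (Yk k) t - iteratedDeriv n Y t := by
    intro n hn t
    exact my_iteratedDeriv_sub ((hYk k).of_le (by exact_mod_cast hn))
      (hY.of_le (by exact_mod_cast hn)) t
  have hiter : ∀ t, iteratedDeriv r Dk t =
      -(∑ j : Fin r, (Aseq k j t * iteratedDeriv (j : ℕ) Dk t
        + (Aseq k j t - A j t) * iteratedDeriv (j : ℕ) Y t)) := by
    intro t
    have e1 : iteratedDeriv r (Yk k) t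
        = -(∑ j : Fin r, Aseq k j t * iteratedDeriv (j : ℕ) (Yk k) t) :=
      eq_neg_of_add_eq_zero_left (hodek k t)
    have e2 : iteratedDeriv r Y t = -(∑ j : Fin r, A j t * iteratedDeriv (j : ℕ) Y t) :=
      eq_neg_of_add_eq_zero_left (hode t)
    have e3 : ∀ j : Fin r, Aseq k j t * iteratedDeriv (j : ℕ) Dk t
        + (Aseq k j t - A j t) * iteratedDeriv (j : ℕ) Y t
        = Aseq k j t * iteratedDeriv (j : ℕ) (Yk k) t - A j t * iteratedDeriv (j : ℕ) Y t := by
      intro j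
      rw [hsub (j : ℕ) j.isLt.le t]
      noncomm_ring
    rw [hsub r le_rfl t, e1, e2, Finset.sum_congr rfl fun j _ => e3 j,
      Finset.sum_sub_distrib]
    abel
  -- the vector of derivatives
  set g : ℝ → (Fin r → Matrix (Fin m) (Fin m) ℂ) :=
    fun t j => iteratedDeriv (j : ℕ) Dk t with hgdef
  set g' : ℝ → (Fin r → Matrix (Fin m) (Fin m) ℂ) :=
    fun t j => iteratedDeriv ((j : ℕ) + 1) Dk t with hg'def
  have hgderiv : ∀ t, HasDerivAt g (g' t) t := by
    intro t
    refine hasDerivAt_pi.2 ?_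
    intro j
    have hd : Differentiable ℝ (iteratedDeriv (j : ℕ) Dk) :=
      hDk.differentiable_iteratedDeriv (j : ℕ) (by exact_mod_cast j.isLt)
    have := (hd t).hasDerivAt
    have e : iteratedDeriv ((j : ℕ) + 1) Dk t = deriv (iteratedDeriv (j : ℕ) Dk) t := by
      rw [iteratedDeriv_succ]; rfl
    simp only [hg'def, hgdef]
    rw [e]
    exact this
  have hgcont : Continuous g := continuous_pi fun j =>
    hDk.continuous_iteratedDeriv (j : ℕ) (by exact_mod_cast j.isLt.le)
  -- initial condition
  have hga : ‖g a‖ ≤ 0 := by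
    have : g a = 0 := by
      funext j
      simp only [hgdef]
      rw [hsub (j : ℕ) j.isLt.le a, hinit k j, sub_self]
      rfl
    rw [this, norm_zero]
  -- the Gronwall bound
  set ε₀ : ℝ := P * η with hε₀def
  have hε₀ : 0 ≤ ε₀ := by positivity
  have hbound : ∀ t ∈ Set.Ico a b, ‖g' t‖ ≤ K * ‖g t‖ + ε₀ := by
    intro t ht
    have ht' : t ∈ Set.Icc a b := Set.Ico_subset_Icc_self ht
    have hrhs0 : (0:ℝ) ≤ K * ‖g t‖ + ε₀ := by positivity
    rw [pi_norm_le_iff_of_nonneg hrhs0]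
    intro j
    rcases Nat.lt_or_ge ((j : ℕ) + 1) r with hlt | hge
    · have e : g' t j = g t ⟨(j : ℕ) + 1, hlt⟩ := rfl
      rw [e]
      calc ‖g t ⟨(j : ℕ) + 1, hlt⟩‖ ≤ ‖g t‖ := norm_le_pi_norm (g t) _
        _ ≤ K * ‖g t‖ := le_mul_of_one_le_left (norm_nonneg _) hK1
        _ ≤ K * ‖g t‖ + ε₀ := le_add_of_nonneg_right hε₀
    · have hjr : (j : ℕ) + 1 = r := le_antisymm j.isLt hge
      have e : g' t j = iteratedDeriv r Dk t := by simp only [hg'def]; rw [hjr]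
      rw [e, hiter t, norm_neg]
      have hterm : ∀ j' : Fin r,
          ‖Aseq k j' t * iteratedDeriv (j' : ℕ) Dk t
            + (Aseq k j' t - A j' t) * iteratedDeriv (j' : ℕ) Y t‖
          ≤ m * (CA0 + 1) * ‖g t‖ + m * (CY0 + 1) * η := by
        intro j'
        have h1 : ‖Aseq k j' t‖ ≤ CA0 + 1 := by
          calc ‖Aseq k j' t‖ = ‖A j' t + (Aseq k j' t - A j' t)‖ := by congr 1; abel
            _ ≤ ‖A j' t‖ + ‖Aseq k j' t - A j' t‖ := norm_add_le _ _
            _ ≤ CA0 + 1 := add_le_add (hCAb j' t ht') ((hk j' t ht').trans hη1)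
        have h2 : ‖iteratedDeriv (j' : ℕ) Dk t‖ ≤ ‖g t‖ := norm_le_pi_norm (g t) j'
        have h3 : ‖Aseq k j' t - A j' t‖ ≤ η := hk j' t ht'
        have h4 : ‖iteratedDeriv (j' : ℕ) Y t‖ ≤ CY0 := hCYb j' t ht'
        calc ‖Aseq k j' t * iteratedDeriv (j' : ℕ) Dk t
              + (Aseq k j' t - A j' t) * iteratedDeriv (j' : ℕ) Y t‖
            ≤ ‖Aseq k j' t * iteratedDeriv (j' : ℕ) Dk t‖
              + ‖(Aseq k j' t - A j' t) * iteratedDeriv (j' : ℕ) Y t‖ := norm_add_le _ _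
          _ ≤ m * ‖Aseq k j' t‖ * ‖iteratedDeriv (j' : ℕ) Dk t‖
              + m * ‖Aseq k j' t - A j' t‖ * ‖iteratedDeriv (j' : ℕ) Y t‖ :=
            add_le_add (my_norm_mul_le _ _) (my_norm_mul_le _ _)
          _ ≤ m * (CA0 + 1) * ‖g t‖ + m * (CY0 + 1) * η := by
              have hm0 : (0:ℝ) ≤ m := Nat.cast_nonneg m
              have p1 : (m:ℝ) * ‖Aseq k j' t‖ * ‖iteratedDeriv (j' : ℕ) Dk t‖
                  ≤ m * (CA0 + 1) * ‖g t‖ :=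
                mul_le_mul (mul_le_mul_of_nonneg_left h1 hm0) h2 (norm_nonneg _)
                  (by positivity)
              have p2 : (m:ℝ) * ‖Aseq k j' t - A j' t‖ * ‖iteratedDeriv (j' : ℕ) Y t‖
                  ≤ m * η * CY0 :=
                mul_le_mul (mul_le_mul_of_nonneg_left h3 hm0) h4 (norm_nonneg _)
                  (by positivity)
              nlinarith [mul_nonneg hm0 hη.le]
      calc ‖∑ j' : Fin r, (Aseq k j' t * iteratedDeriv (j' : ℕ) Dk t
            + (Aseq k j' t - A j' t) * iteratedDeriv (j' : ℕ) Y t)‖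
          ≤ ∑ j' : Fin r, ‖Aseq k j' t * iteratedDeriv (j' : ℕ) Dk t
            + (Aseq k j' t - A j' t) * iteratedDeriv (j' : ℕ) Y t‖ := norm_sum_le _ _
        _ ≤ ∑ _j' : Fin r, (m * (CA0 + 1) * ‖g t‖ + m * (CY0 + 1) * η) :=
            Finset.sum_le_sum fun j' _ => hterm j'
        _ = r * (m * (CA0 + 1) * ‖g t‖ + m * (CY0 + 1) * η) := by
            rw [Finset.sum_const, Finset.card_univ, Fintype.card_fin, nsmul_eq_mul]
        _ ≤ K * ‖g t‖ + ε₀ := by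
            have := norm_nonneg (g t)
            simp only [hKdef, hε₀def, hPdef]
            nlinarith [hη.le]
  have hG := norm_le_gronwallBound_of_norm_deriv_right_le
    (f := g) (f' := g') (hgcont.continuousOn)
    (fun t _ => (hgderiv t).hasDerivWithinAt) hga hbound
  -- conclusion
  intro t ht j
  have h1 : ‖iteratedDeriv (j : ℕ) (Yk k) t - iteratedDeriv (j : ℕ) Y t‖ = ‖g t j‖ := by
    simp only [hgdef]
    rw [hsub (j : ℕ) j.isLt.le t]
  rw [h1]
  have h2 : ‖g t j‖ ≤ ‖g t‖ := norm_le_pi_norm (g t) j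
  have h3 := hG t ht
  have h4 : gronwallBound 0 K ε₀ (t - a) ≤ ε := by
    rw [gronwallBound_of_K_ne_0 hK.ne']
    have he1 : Real.exp (K * (t - a)) - 1 ≤ E := by
      have : K * (t - a) ≤ K * (b - a) :=
        mul_le_mul_of_nonneg_left (by linarith [ht.2]) hK.le
      have := Real.exp_le_exp.2 this
      simp only [hEdef]
      linarith
    have he2 : (0:ℝ) ≤ ε₀ / K := by positivity
    have hstep : ε₀ / K * (Real.exp (K * (t - a)) - 1) ≤ ε₀ / K * E :=
      mul_le_mul_of_nonneg_left he1 he2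
    have hε₀le : ε₀ ≤ ε * K / E := by
      have : P * η ≤ P * (ε * K / (E * P)) := mul_le_mul_of_nonneg_left hη2 hP.le
      calc ε₀ = P * η := rfl
        _ ≤ P * (ε * K / (E * P)) := this
        _ = ε * K / E := by field_simp
    have hfin : ε₀ / K * E ≤ ε := by
      rw [div_mul_eq_mul_div, div_le_iff₀ hK]
      calc ε₀ * E ≤ (ε * K / E) * E := mul_le_mul_of_nonneg_right hε₀le hE.le
        _ = ε * K := by field_simp
    calc (0:ℝ) * Real.exp (K * (t - a)) + ε₀ / K * (Real.exp (K * (t - a)) - 1)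
        = ε₀ / K * (Real.exp (K * (t - a)) - 1) := by ring
      _ ≤ ε₀ / K * E := hstep
      _ ≤ ε := hfin
  linarith

noncomputable def colCLM (m : ℕ) (c : Fin m) : Matrix (Fin m) (Fin m) ℂ →L[ℝ] (Fin m → ℂ) :=
  LinearMap.mkContinuous
    { toFun := fun M => fun v => M v c
      map_add' := fun M N => by funext v; simp [Matrix.add_apply]
      map_smul' := fun s M => by funext v; simp [Matrix.smul_apply] }
    1 (fun M => by
      rw [one_mul, pi_norm_le_iff_of_nonneg (norm_nonneg M)]
      intro v
      exact Matrix.norm_entry_le_entrywise_sup_norm M)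

lemma colCLM_apply {m : ℕ} (c : Fin m) (M : Matrix (Fin m) (Fin m) ℂ) :
    colCLM m c M = fun v => M v c := rfl

lemma col_iteratedDeriv {m : ℕ} (c : Fin m) {r : ℕ} {f : ℝ → Matrix (Fin m) (Fin m) ℂ}
    (hf : ContDiff ℝ r f) {n : ℕ} (hn : n ≤ r) (t : ℝ) :
    iteratedDeriv n (fun s v => f s v c) t = fun v => iteratedDeriv n f t v c := by
  have h : (fun s v => f s v c) = fun s => colCLM m c (f s) := rfl
  rw [h]
  exact my_iteratedDeriv_clm (colCLM m c) hf hn t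

lemma jet_cont {a b : ℝ} {m r : ℕ} (c : Fin m) {f : ℝ → Matrix (Fin m) (Fin m) ℂ}
    (hf : ContDiff ℝ r f) :
    Continuous fun t : Set.Icc a b =>
      fun p : Fin r × Fin m => iteratedDeriv (p.1 : ℕ) (fun s v => f s v c) t.1 p.2 := by
  apply continuous_pi
  intro p
  have h1 : ∀ s : Set.Icc a b,
      iteratedDeriv (p.1 : ℕ) (fun s v => f s v c) s.1 p.2
        = iteratedDeriv (p.1 : ℕ) f s.1 p.2 c := fun s =>
    congrFun (col_iteratedDeriv c hf p.1.isLt.le s.1) p.2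
  simp only [h1]
  have h2 : Continuous (iteratedDeriv (p.1 : ℕ) f) :=
    hf.continuous_iteratedDeriv (p.1 : ℕ) (by exact_mod_cast p.1.isLt.le)
  exact (continuous_apply c).comp ((continuous_apply p.2).comp (h2.comp continuous_subtype_val))

lemma jetCM_eq {a b : ℝ} {m : ℕ} {r : ℕ} (c : Fin m) {f : ℝ → Matrix (Fin m) (Fin m) ℂ}
    (hf : ContDiff ℝ r f) :
    jetCM a b r (fun t v => f t v c)
      = ⟨_, jet_cont c hf⟩ :=
  dif_pos _

set_option maxHeartbeats 1000000 in
/-- If the coefficients `A_j(·,k)` converge uniformly on `[a,b]` to `A_j` and the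
continuous linear boundary operators `B_k` converge strongly to `B`, then the
characteristic matrices built from the fundamental solutions `Y_i(·,k)` and `B_k`
converge entrywise to the characteristic matrix built from `Y_i` and `B`. -/
theorem characteristic_matrices_converge
    (a b : ℝ) (hab : a < b) (m r l : ℕ) (hm : 0 < m) (hr : 0 < r) (hl : 0 < l)
    (A : Fin r → ℝ → Matrix (Fin m) (Fin m) ℂ) (hA : ∀ j, Continuous (A j))
    (Aseq : ℕ → Fin r → ℝ → Matrix (Fin m) (Fin m) ℂ)
    (hAseq : ∀ k j, Continuous (Aseq k j))
    (hAconv : ∀ j, TendstoUniformlyOn (fun k t => Aseq k j t) (A j)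
      Filter.atTop (Set.Icc a b))
    (Y : Fin r → ℝ → Matrix (Fin m) (Fin m) ℂ)
    (Yseq : ℕ → Fin r → ℝ → Matrix (Fin m) (Fin m) ℂ)
    (hYsmooth : ∀ i, ContDiff ℝ r (Y i))
    (hYseqsmooth : ∀ k i, ContDiff ℝ r (Yseq k i))
    (hYode : ∀ i t, iteratedDeriv r (Y i) t +
        ∑ j : Fin r, A j t * iteratedDeriv (j : ℕ) (Y i) t = 0)
    (hYseqode : ∀ k i t, iteratedDeriv r (Yseq k i) t +
        ∑ j : Fin r, Aseq k j t * iteratedDeriv (j : ℕ) (Yseq k i) t = 0)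
    (hYinit : ∀ i j : Fin r,
        iteratedDeriv (j : ℕ) (Y i) a = if i = j then (1 : Matrix (Fin m) (Fin m) ℂ) else 0)
    (hYseqinit : ∀ k, ∀ i j : Fin r,
        iteratedDeriv (j : ℕ) (Yseq k i) a =
          if i = j then (1 : Matrix (Fin m) (Fin m) ℂ) else 0)
    (B : C(Set.Icc a b, Fin r × Fin m → ℂ) →L[ℂ] (Fin l → ℂ))
    (Bseq : ℕ → C(Set.Icc a b, Fin r × Fin m → ℂ) →L[ℂ] (Fin l → ℂ))
    (hBconv : ∀ u, Filter.Tendsto (fun k => Bseq k u) Filter.atTop (nhds (B u))) :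
    ∀ (q : Fin l) (p : Fin r × Fin m),
      Filter.Tendsto (fun k => charMatrix a b (Bseq k) (Yseq k) q p)
        Filter.atTop (nhds (charMatrix a b B Y q p)) := by
  intro q p
  set u : C(Set.Icc a b, Fin r × Fin m → ℂ) :=
    jetCM a b r (fun t v => Y p.1 t v p.2) with hudef
  set useq : ℕ → C(Set.Icc a b, Fin r × Fin m → ℂ) :=
    fun k => jetCM a b r (fun t v => Yseq k p.1 t v p.2) with huseqdef
  -- convergence of the jets in the sup metric
  have hjconv : Filter.Tendsto useq Filter.atTop (nhds u) := by
    rw [Metric.tendsto_atTop]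
    intro ε hε
    have hinit : ∀ k, ∀ j : Fin r,
        iteratedDeriv (j : ℕ) (Yseq k p.1) a = iteratedDeriv (j : ℕ) (Y p.1) a :=
      fun k j => (hYseqinit k p.1 j).trans (hYinit p.1 j).symm
    have hkey := key_conv hm hr hab A hA Aseq hAconv (Y p.1) (fun k => Yseq k p.1)
      (hYsmooth p.1) (fun k => hYseqsmooth k p.1) (hYode p.1) (fun k t => hYseqode k p.1 t)
      hinit (half_pos hε)
    obtain ⟨N, hN⟩ := Filter.eventually_atTop.1 hkey
    refine ⟨N, fun k hk => ?_⟩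
    have hb := hN k hk
    have hd : dist (useq k) u ≤ ε / 2 := by
      show dist (jetCM a b r fun t v => Yseq k p.1 t v p.2)
        (jetCM a b r fun t v => Y p.1 t v p.2) ≤ ε / 2
      rw [jetCM_eq p.2 (hYseqsmooth k p.1), jetCM_eq p.2 (hYsmooth p.1),
        ContinuousMap.dist_le (le_of_lt (half_pos hε))]
      intro x
      rw [dist_pi_le_iff (le_of_lt (half_pos hε))]
      intro p'
      have e1 : iteratedDeriv (p'.1 : ℕ) (fun s v => Yseq k p.1 s v p.2) x.1 p'.2
          = iteratedDeriv (p'.1 : ℕ) (Yseq k p.1) x.1 p'.2 p.2 :=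
        congrFun (col_iteratedDeriv p.2 (hYseqsmooth k p.1) p'.1.isLt.le x.1) p'.2
      have e2 : iteratedDeriv (p'.1 : ℕ) (fun s v => Y p.1 s v p.2) x.1 p'.2
          = iteratedDeriv (p'.1 : ℕ) (Y p.1) x.1 p'.2 p.2 :=
        congrFun (col_iteratedDeriv p.2 (hYsmooth p.1) p'.1.isLt.le x.1) p'.2
      show dist (iteratedDeriv (p'.1 : ℕ) (fun s v => Yseq k p.1 s v p.2) x.1 p'.2)
        (iteratedDeriv (p'.1 : ℕ) (fun s v => Y p.1 s v p.2) x.1 p'.2) ≤ ε / 2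
      rw [e1, e2, Complex.dist_eq]
      have e3 : iteratedDeriv (p'.1 : ℕ) (Yseq k p.1) x.1 p'.2 p.2
          - iteratedDeriv (p'.1 : ℕ) (Y p.1) x.1 p'.2 p.2
          = (iteratedDeriv (p'.1 : ℕ) (Yseq k p.1) x.1
            - iteratedDeriv (p'.1 : ℕ) (Y p.1) x.1) p'.2 p.2 := by
        simp [Matrix.sub_apply]
      rw [e3]
      calc ‖(iteratedDeriv (p'.1 : ℕ) (Yseq k p.1) x.1
            - iteratedDeriv (p'.1 : ℕ) (Y p.1) x.1) p'.2 p.2‖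
          ≤ ‖iteratedDeriv (p'.1 : ℕ) (Yseq k p.1) x.1
            - iteratedDeriv (p'.1 : ℕ) (Y p.1) x.1‖ :=
            Matrix.norm_entry_le_entrywise_sup_norm _
        _ ≤ ε / 2 := hb x.1 x.2 p'.1
    calc dist (useq k) u ≤ ε / 2 := hd
      _ < ε := half_lt_self hε
  -- uniform bound on the operators (Banach–Steinhaus)
  have hbdd : ∃ C, ∀ k, ‖Bseq k‖ ≤ C := by
    apply banach_steinhaus
    intro x
    obtain ⟨C, hC⟩ := (hBconv x).norm.bddAbove_range
    exact ⟨C, fun k => hC (Set.mem_range_self k)⟩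
  obtain ⟨C, hC⟩ := hbdd
  -- main convergence
  have hmain : Filter.Tendsto (fun k => Bseq k (useq k)) Filter.atTop (nhds (B u)) := by
    rw [tendsto_iff_norm_sub_tendsto_zero]
    have hb : ∀ k, ‖Bseq k (useq k) - B u‖ ≤ C * dist (useq k) u + ‖Bseq k u - B u‖ := by
      intro k
      calc ‖Bseq k (useq k) - B u‖
          = ‖(Bseq k (useq k) - Bseq k u) + (Bseq k u - B u)‖ := by ring_nf
        _ ≤ ‖Bseq k (useq k) - Bseq k u‖ + ‖Bseq k u - B u‖ := norm_add_le _ _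
        _ ≤ C * dist (useq k) u + ‖Bseq k u - B u‖ := by
            have h1 : ‖Bseq k (useq k) - Bseq k u‖ = ‖Bseq k (useq k - u)‖ := by
              rw [map_sub]
            have h2 : ‖Bseq k (useq k - u)‖ ≤ ‖Bseq k‖ * ‖useq k - u‖ :=
              (Bseq k).le_opNorm _
            have h3 : ‖Bseq k‖ * ‖useq k - u‖ ≤ C * ‖useq k - u‖ :=
              mul_le_mul_of_nonneg_right (hC k) (norm_nonneg _)
            rw [dist_eq_norm]
            linarith [h1 ▸ (h2.trans h3)]
    have hlim : Filter.Tendsto (fun k => C * dist (useq k) u + ‖Bseq k u - B u‖)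
        Filter.atTop (nhds 0) := by
      have l1 : Filter.Tendsto (fun k => dist (useq k) u) Filter.atTop (nhds 0) :=
        tendsto_iff_dist_tendsto_zero.1 hjconv
      have l2 := tendsto_iff_norm_sub_tendsto_zero.1 (hBconv u)
      have := (l1.const_mul C).add l2
      simpa using this
    exact squeeze_zero (fun k => norm_nonneg _) hb hlim
  have := tendsto_pi_nhds.1 hmain q
  simpa only [charMatrix, Matrix.of_apply] using this
end
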